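/- arXiv:1305.5211 — 9 statements merged into one kernel-verified Lean document; each statement's English description precedes it below -/
import Mathlib

section
/- The entry of largest modulus of a complex symmetric positive definite matrix lies on its main diagonal; that is, max_{j,k} |a_{jk}| = max_j |a_{jj}|. -/
open Matrix Complex Finset

/-- A complex matrix is CSPD (a Higham matrix) if it is `B + iC` with `B`, `C`
real symmetric positive definite. -/
def IsCSPD {m : Type*} [Fintype m] [DecidableEq m] (A : Matrix m m ℂ) : Prop :=
  ∃ B C : Matrix m m ℝ, B.IsSymm ∧ B.PosDef ∧ C.IsSymm ∧ C.PosDef ∧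
    A = B.map (fun x => (x : ℂ)) + Complex.I • C.map (fun x => (x : ℂ))

lemma spd_quad {m : Type*} [Fintype m] [DecidableEq m] {B : Matrix m m ℝ}
    (hp : B.PosDef) (j k : m) (hjk : j ≠ k) (t : ℝ) :
    0 ≤ B j j * (t * t) + (B j k + B k j) * t + B k k := by
  set x : m → ℝ := fun i => t * (Pi.single j 1 : m → ℝ) i + (Pi.single k 1 : m → ℝ) i with hx
  have hxne : x ≠ 0 := by
    intro h
    have := congrFun h k
    simp [hx, Pi.single_eq_of_ne (Ne.symm hjk)] at this
  have h := hp.dotProduct_mulVec_pos hxne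
  have hs : star x = x := by simp
  rw [hs] at h
  have hcalc : dotProduct x (B *ᵥ x) =
      B j j * (t * t) + (B j k + B k j) * t + B k k := by
    simp only [hx, dotProduct, mulVec, dotProduct, Pi.single_apply]
    simp only [mul_add, add_mul, mul_ite, ite_mul, mul_zero, zero_mul, mul_one, one_mul,
      Finset.sum_add_distrib, Finset.sum_ite_eq', Finset.mem_univ, if_true]
    ring
  rw [hcalc] at h
  exact h.le

lemma spd_entry_sq_le {m : Type*} [Fintype m] [DecidableEq m] {B : Matrix m m ℝ}
    (hp : B.PosDef) (j k : m) : B j k ^ 2 ≤ B j j * B k k := by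
  rcases eq_or_ne j k with rfl | hjk
  · rw [sq]
  · have hsym : B k j = B j k := by
      have := hp.1
      have h2 := congrFun (congrFun this j) k
      simpa [Matrix.conjTranspose_apply] using h2
    have hd := discrim_le_zero (a := B j j) (b := B j k + B k j) (c := B k k)
      (spd_quad hp j k hjk)
    rw [discrim] at hd
    rw [hsym] at hd
    nlinarith [hd]

lemma spd_diag_pos {m : Type*} [Fintype m] [DecidableEq m] {B : Matrix m m ℝ}
    (hp : B.PosDef) (j : m) : 0 < B j j := by
  have h := hp.dotProduct_mulVec_pos (x := Pi.single j (1:ℝ)) (by simp [Function.ne_iff])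
  simpa [mulVec_single, single_dotProduct] using h

lemma cspd_entry_le {m : Type*} [Fintype m] [DecidableEq m]
    (A : Matrix m m ℂ) (hA : IsCSPD A) (j k : m) :
    ‖A j k‖ ≤ max (‖A j j‖) (‖A k k‖) := by
  obtain ⟨B, C, hBs, hBp, hCs, hCp, hEq⟩ := hA
  have hre : ∀ i l, (A i l).re = B i l := by
    intro i l; simp [hEq, Matrix.add_apply, Matrix.smul_apply, Matrix.map_apply]
  have him : ∀ i l, (A i l).im = C i l := by
    intro i l; simp [hEq, Matrix.add_apply, Matrix.smul_apply, Matrix.map_apply]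
  have hsq : ∀ i l, ‖A i l‖ ^ 2 = B i l ^ 2 + C i l ^ 2 := by
    intro i l
    rw [Complex.sq_norm, Complex.normSq_apply, hre, him]; ring
  have hb := spd_entry_sq_le hBp j k
  have hc := spd_entry_sq_le hCp j k
  have hb1 := spd_diag_pos hBp j
  have hb2 := spd_diag_pos hBp k
  have hc1 := spd_diag_pos hCp j
  have hc2 := spd_diag_pos hCp k
  set u := ‖A j k‖
  set s := ‖A j j‖
  set t := ‖A k k‖
  have hu : u ^ 2 = B j k ^ 2 + C j k ^ 2 := hsq j k
  have hs' : s ^ 2 = B j j ^ 2 + C j j ^ 2 := hsq j j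
  have ht' : t ^ 2 = B k k ^ 2 + C k k ^ 2 := hsq k k
  have hun : 0 ≤ u := norm_nonneg _
  have hsn : 0 ≤ s := norm_nonneg _
  have htn : 0 ≤ t := norm_nonneg _
  have hust : u ^ 2 ≤ s * t := by
    have h4 : u ^ 2 * u ^ 2 ≤ (s * t) * (s * t) := by
      nlinarith [sq_nonneg (B j j * C k k - B k k * C j j), sq_nonneg (B j k), sq_nonneg (C j k)]
    nlinarith [mul_nonneg hsn htn, sq_nonneg u]
  rcases le_total s t with h | h
  · refine le_max_of_le_right ?_
    nlinarith
  · refine le_max_of_le_left ?_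
    nlinarith

/-- The entry of largest modulus of a CSPD matrix lies on its main diagonal:
`max_{j,k} |a_{jk}| = max_j |a_{jj}|`. -/
theorem cspd_max_on_diagonal {m : Type*} [Fintype m] [DecidableEq m] [Nonempty m]
    (A : Matrix m m ℂ) (hA : IsCSPD A) :
    (Finset.univ.sup' Finset.univ_nonempty
        (fun p : m × m => ‖A p.1 p.2‖)) =
      Finset.univ.sup' Finset.univ_nonempty (fun j : m => ‖A j j‖) := by
  apply le_antisymm
  · refine Finset.sup'_le _ _ fun p _ => ?_
    refine le_trans (cspd_entry_le A hA p.1 p.2) (max_le ?_ ?_)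
    · exact Finset.le_sup' (fun j : m => ‖A j j‖) (Finset.mem_univ p.1)
    · exact Finset.le_sup' (fun j : m => ‖A j j‖) (Finset.mem_univ p.2)
  · refine Finset.sup'_le _ _ fun j _ => ?_
    exact Finset.le_sup' (fun p : m × m => ‖A p.1 p.2‖) (Finset.mem_univ (j, j))
end

section
/- Let B be an n×n Hermitian positive definite matrix with largest eigenvalue λ₁ and smallest eigenvalue λₙ. Then for all vectors x, y ∈ ℂⁿ with x*y = 0, one has |x* B y|² ≤ ((λ₁ − λₙ)/(λ₁ + λₙ))² (x* B x)(y* B y). -/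
open Matrix Complex
open scoped ComplexOrder

lemma wielandt_scalar (L n nx ny a b t : ℝ) (hn : 0 < n) (hnL : n ≤ L)
    (hnx : 0 ≤ nx) (hny : 0 ≤ ny) (ht : 0 ≤ t)
    (ha1 : n * nx ≤ a) (ha2 : a ≤ L * nx) (hb1 : n * ny ≤ b) (hb2 : b ≤ L * ny)
    (h1 : t ≤ (a - n * nx) * (b - n * ny)) (h2 : t ≤ (L * nx - a) * (L * ny - b)) :
    t * (L + n) ^ 2 ≤ (L - n) ^ 2 * a * b := by
  have hL : 0 < L := lt_of_lt_of_le hn hnL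
  have ha0 : 0 ≤ a := le_trans (mul_nonneg hn.le hnx) ha1
  have hb0 : 0 ≤ b := le_trans (mul_nonneg hn.le hny) hb1
  have hLn : 0 < L + n := by linarith
  rcases le_total (2 * a) (nx * (L + n)) with hA | hA <;>
      rcases le_total (2 * b) (ny * (L + n)) with hB | hB
  · have hka : (a - n * nx) * (L + n) ≤ (L - n) * a := by nlinarith
    have hkb : (b - n * ny) * (L + n) ≤ (L - n) * b := by nlinarith
    have := mul_le_mul hka hkb (mul_nonneg (by linarith) hLn.le)
      (mul_nonneg (by linarith) ha0)
    nlinarith [mul_le_mul_of_nonneg_right h1 (sq_nonneg (L + n))]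
  · have key : (2 * a - nx * (L + n)) * (2 * b - ny * (L + n)) ≤ 0 :=
      mul_nonpos_of_nonpos_of_nonneg (by linarith) (by linarith)
    nlinarith [mul_le_mul_of_nonneg_left h1 hL.le, mul_le_mul_of_nonneg_left h2 hn.le,
      mul_pos (mul_pos hL hn) hLn]
  · have key : (2 * a - nx * (L + n)) * (2 * b - ny * (L + n)) ≤ 0 :=
      mul_nonpos_of_nonneg_of_nonpos (by linarith) (by linarith)
    nlinarith [mul_le_mul_of_nonneg_left h1 hL.le, mul_le_mul_of_nonneg_left h2 hn.le,
      mul_pos (mul_pos hL hn) hLn]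
  · have hka : (L * nx - a) * (L + n) ≤ (L - n) * a := by nlinarith
    have hkb : (L * ny - b) * (L + n) ≤ (L - n) * b := by nlinarith
    have := mul_le_mul hka hkb (mul_nonneg (by linarith) hLn.le)
      (mul_nonneg (by linarith) ha0)
    nlinarith [mul_le_mul_of_nonneg_right h2 (sq_nonneg (L + n))]

lemma sum_cs {m : Type*} [Fintype m] (d : m → ℝ) (hd : ∀ i, 0 ≤ d i) (w z : m → ℂ) :
    ‖∑ i, (d i : ℂ) * ((starRingEnd ℂ) (w i) * z i)‖ ^ 2 ≤
      (∑ i, d i * Complex.normSq (w i)) * (∑ i, d i * Complex.normSq (z i)) := by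
  set p : EuclideanSpace ℂ m := (WithLp.equiv 2 (m → ℂ)).symm
    (fun i => (Real.sqrt (d i) : ℂ) * w i) with hp
  set q : EuclideanSpace ℂ m := (WithLp.equiv 2 (m → ℂ)).symm
    (fun i => (Real.sqrt (d i) : ℂ) * z i) with hq
  have hsq : ∀ i, (Real.sqrt (d i) : ℂ) * (Real.sqrt (d i) : ℂ) = (d i : ℂ) := fun i => by
    rw [← Complex.ofReal_mul, Real.mul_self_sqrt (hd i)]
  have hinner : inner ℂ p q = ∑ i, (d i : ℂ) * ((starRingEnd ℂ) (w i) * z i) := by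
    rw [hp, hq, WithLp.equiv_symm_apply, EuclideanSpace.inner_toLp_toLp, dotProduct]
    refine Finset.sum_congr rfl fun i _ => ?_
    simp only [Pi.star_apply, star_mul', RCLike.star_def, Complex.conj_ofReal]
    rw [← hsq i]; ring
  have key : ∀ v : m → ℂ, ((inner ℂ ((WithLp.equiv 2 (m → ℂ)).symm
      (fun i => (Real.sqrt (d i) : ℂ) * v i))
      ((WithLp.equiv 2 (m → ℂ)).symm (fun i => (Real.sqrt (d i) : ℂ) * v i)) : ℂ)).re
      = ∑ i, d i * Complex.normSq (v i) := by
    intro v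
    rw [WithLp.equiv_symm_apply, EuclideanSpace.inner_toLp_toLp, dotProduct, Complex.re_sum]
    refine Finset.sum_congr rfl fun i _ => ?_
    simp only [Pi.star_apply, star_mul', RCLike.star_def, Complex.conj_ofReal]
    have : (√(d i) : ℂ) * v i * ((√(d i) : ℂ) * (starRingEnd ℂ) (v i))
        = (d i : ℂ) * ((starRingEnd ℂ) (v i) * v i) := by rw [← hsq i]; ring
    rw [this, ← Complex.normSq_eq_conj_mul_self, ← Complex.ofReal_mul, Complex.ofReal_re]
  have CS := inner_mul_inner_self_le (𝕜 := ℂ) p q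
  rw [← inner_conj_symm q p, RCLike.norm_conj, hinner] at CS
  have h1 := key w
  have h2 := key z
  rw [← hp] at h1
  rw [← hq] at h2
  simp only [RCLike.re_to_complex] at CS
  rw [h1, h2] at CS
  calc ‖∑ i, (d i : ℂ) * ((starRingEnd ℂ) (w i) * z i)‖ ^ 2
      = ‖∑ i, (d i : ℂ) * ((starRingEnd ℂ) (w i) * z i)‖ *
        ‖∑ i, (d i : ℂ) * ((starRingEnd ℂ) (w i) * z i)‖ := by
        rw [pow_two]
    _ ≤ _ := CS

lemma star_vecMul_eq {m : Type*} [Fintype m] {V : Matrix m m ℂ} (x : m → ℂ) :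
    star x ᵥ* V = star (star V *ᵥ x) := by
  rw [star_mulVec, star_eq_conjTranspose, conjTranspose_conjTranspose]

lemma diag_repr {m : Type*} [Fintype m] [DecidableEq m] {B : Matrix m m ℂ}
    (hB : B.IsHermitian) (x y : m → ℂ) :
    star x ⬝ᵥ B *ᵥ y = ∑ i, (hB.eigenvalues i : ℂ) *
      ((starRingEnd ℂ) ((star (hB.eigenvectorUnitary : Matrix m m ℂ) *ᵥ x) i) *
       ((star (hB.eigenvectorUnitary : Matrix m m ℂ) *ᵥ y) i)) := by
  conv_lhs => rw [hB.spectral_theorem, Unitary.conjStarAlgAut_apply]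
  rw [← mulVec_mulVec, ← mulVec_mulVec, dotProduct_mulVec, star_vecMul_eq]
  rw [dotProduct]
  refine Finset.sum_congr rfl fun i _ => ?_
  rw [mulVec_diagonal]
  simp only [Pi.star_apply, RCLike.star_def, Function.comp_apply]
  rw [show (RCLike.ofReal (hB.eigenvalues i) : ℂ) = ((hB.eigenvalues i : ℝ) : ℂ) from rfl]
  ring

lemma unitary_dot {m : Type*} [Fintype m] [DecidableEq m] {B : Matrix m m ℂ}
    (hB : B.IsHermitian) (x y : m → ℂ) :
    star (star (hB.eigenvectorUnitary : Matrix m m ℂ) *ᵥ x) ⬝ᵥ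
      (star (hB.eigenvectorUnitary : Matrix m m ℂ) *ᵥ y) = star x ⬝ᵥ y := by
  rw [← star_vecMul_eq, ← dotProduct_mulVec, mulVec_mulVec,
    (mem_unitaryGroup_iff.mp hB.eigenvectorUnitary.2), one_mulVec]

/-- Wielandt's inequality: for a Hermitian positive definite matrix `B` with
largest eigenvalue `λ₁` and smallest eigenvalue `λₙ`, and orthogonal vectors
`x`, `y`, we have `|x* B y|² ≤ ((λ₁-λₙ)/(λ₁+λₙ))² (x* B x)(y* B y)`. -/
theorem wielandt_inequality {m : Type*} [Fintype m] [DecidableEq m] [Nonempty m]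
    (B : Matrix m m ℂ) (hB : B.PosDef)
    (l1 ln : ℝ)
    (hl1 : l1 = ⨆ i, hB.isHermitian.eigenvalues i)
    (hln : ln = ⨅ i, hB.isHermitian.eigenvalues i)
    (x y : m → ℂ) (hxy : star x ⬝ᵥ y = 0) :
    ‖star x ⬝ᵥ B.mulVec y‖ ^ 2 ≤
      ((l1 - ln) / (l1 + ln)) ^ 2 * (star x ⬝ᵥ B.mulVec x).re *
        (star y ⬝ᵥ B.mulVec y).re := by
  have hH := hB.isHermitian
  set lam : m → ℝ := hH.eigenvalues with hlam
  set w : m → ℂ := star (hH.eigenvectorUnitary : Matrix m m ℂ) *ᵥ x with hw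
  set z : m → ℂ := star (hH.eigenvectorUnitary : Matrix m m ℂ) *ᵥ y with hz
  -- eigenvalue bounds
  have hge : ∀ i, ln ≤ lam i := fun i => hln ▸ ciInf_le (Set.Finite.bddBelow (Set.finite_range _)) i
  have hle : ∀ i, lam i ≤ l1 := fun i => hl1 ▸ le_ciSup (Set.Finite.bddAbove (Set.finite_range _)) i
  have hln_pos : 0 < ln := by
    obtain ⟨i, hi⟩ := exists_eq_ciInf_of_finite (f := lam)
    rw [hln, ← hi]; exact hB.eigenvalues_pos i
  have hnL : ln ≤ l1 := le_trans (hge (Classical.arbitrary m)) (hle (Classical.arbitrary m))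
  -- orthogonality in diagonal coordinates
  have horth : ∑ i, (starRingEnd ℂ) (w i) * z i = 0 := by
    have := unitary_dot hH x y
    rw [hxy] at this
    rw [← this, dotProduct]
    exact Finset.sum_congr rfl fun i _ => rfl
  -- representations
  have hc : star x ⬝ᵥ B *ᵥ y = ∑ i, (lam i : ℂ) * ((starRingEnd ℂ) (w i) * z i) :=
    diag_repr hH x y
  have hare : (star x ⬝ᵥ B *ᵥ x).re = ∑ i, lam i * Complex.normSq (w i) := by
    rw [diag_repr hH x x, Complex.re_sum]
    refine Finset.sum_congr rfl fun i _ => ?_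
    rw [← Complex.normSq_eq_conj_mul_self, ← Complex.ofReal_mul, Complex.ofReal_re]
  have hbre : (star y ⬝ᵥ B *ᵥ y).re = ∑ i, lam i * Complex.normSq (z i) := by
    rw [diag_repr hH y y, Complex.re_sum]
    refine Finset.sum_congr rfl fun i _ => ?_
    rw [← Complex.normSq_eq_conj_mul_self, ← Complex.ofReal_mul, Complex.ofReal_re]
  set a : ℝ := ∑ i, lam i * Complex.normSq (w i) with haa
  set b : ℝ := ∑ i, lam i * Complex.normSq (z i) with hbb
  set nx : ℝ := ∑ i, Complex.normSq (w i) with hnx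
  set ny : ℝ := ∑ i, Complex.normSq (z i) with hny
  set t : ℝ := ‖star x ⬝ᵥ B *ᵥ y‖ ^ 2 with htt
  have hnx0 : 0 ≤ nx := Finset.sum_nonneg fun i _ => Complex.normSq_nonneg _
  have hny0 : 0 ≤ ny := Finset.sum_nonneg fun i _ => Complex.normSq_nonneg _
  have ht0 : 0 ≤ t := sq_nonneg _
  -- bounds on a, b
  have ha1 : ln * nx ≤ a := by
    rw [haa, hnx, Finset.mul_sum]
    exact Finset.sum_le_sum fun i _ =>
      mul_le_mul_of_nonneg_right (hge i) (Complex.normSq_nonneg _)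
  have ha2 : a ≤ l1 * nx := by
    rw [haa, hnx, Finset.mul_sum]
    exact Finset.sum_le_sum fun i _ =>
      mul_le_mul_of_nonneg_right (hle i) (Complex.normSq_nonneg _)
  have hb1 : ln * ny ≤ b := by
    rw [hbb, hny, Finset.mul_sum]
    exact Finset.sum_le_sum fun i _ =>
      mul_le_mul_of_nonneg_right (hge i) (Complex.normSq_nonneg _)
  have hb2 : b ≤ l1 * ny := by
    rw [hbb, hny, Finset.mul_sum]
    exact Finset.sum_le_sum fun i _ =>
      mul_le_mul_of_nonneg_right (hle i) (Complex.normSq_nonneg _)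
  -- first Cauchy-Schwarz with weights lam - ln
  have h1 : t ≤ (a - ln * nx) * (b - ln * ny) := by
    have hcs := sum_cs (fun i => lam i - ln) (fun i => sub_nonneg.2 (hge i)) w z
    have e1 : ∑ i, ((lam i - ln : ℝ) : ℂ) * ((starRingEnd ℂ) (w i) * z i)
        = star x ⬝ᵥ B *ᵥ y := by
      have : ∀ i ∈ Finset.univ, ((lam i - ln : ℝ) : ℂ) * ((starRingEnd ℂ) (w i) * z i)
          = (lam i : ℂ) * ((starRingEnd ℂ) (w i) * z i)
            - (ln : ℂ) * ((starRingEnd ℂ) (w i) * z i) := fun i _ => by push_cast; ring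
      rw [Finset.sum_congr rfl this, Finset.sum_sub_distrib, ← Finset.mul_sum, horth,
        mul_zero, sub_zero, ← hc]
    have e2 : ∑ i, (lam i - ln) * Complex.normSq (w i) = a - ln * nx := by
      rw [haa, hnx, Finset.mul_sum, ← Finset.sum_sub_distrib]
      exact Finset.sum_congr rfl fun i _ => by ring
    have e3 : ∑ i, (lam i - ln) * Complex.normSq (z i) = b - ln * ny := by
      rw [hbb, hny, Finset.mul_sum, ← Finset.sum_sub_distrib]
      exact Finset.sum_congr rfl fun i _ => by ring
    rw [e1, e2, e3] at hcs
    exact hcs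
  -- second Cauchy-Schwarz with weights l1 - lam
  have h2 : t ≤ (l1 * nx - a) * (l1 * ny - b) := by
    have hcs := sum_cs (fun i => l1 - lam i) (fun i => sub_nonneg.2 (hle i)) w z
    have e1 : ∑ i, ((l1 - lam i : ℝ) : ℂ) * ((starRingEnd ℂ) (w i) * z i)
        = -(star x ⬝ᵥ B *ᵥ y) := by
      have : ∀ i ∈ Finset.univ, ((l1 - lam i : ℝ) : ℂ) * ((starRingEnd ℂ) (w i) * z i)
          = (l1 : ℂ) * ((starRingEnd ℂ) (w i) * z i)
            - (lam i : ℂ) * ((starRingEnd ℂ) (w i) * z i) := fun i _ => by push_cast; ring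
      rw [Finset.sum_congr rfl this, Finset.sum_sub_distrib, ← Finset.mul_sum, horth,
        mul_zero, zero_sub, ← hc]
    have e2 : ∑ i, (l1 - lam i) * Complex.normSq (w i) = l1 * nx - a := by
      rw [haa, hnx, Finset.mul_sum, ← Finset.sum_sub_distrib]
      exact Finset.sum_congr rfl fun i _ => by ring
    have e3 : ∑ i, (l1 - lam i) * Complex.normSq (z i) = l1 * ny - b := by
      rw [hbb, hny, Finset.mul_sum, ← Finset.sum_sub_distrib]
      exact Finset.sum_congr rfl fun i _ => by ring
    rw [e1, e2, e3, norm_neg] at hcs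
    exact hcs
  -- conclude via the scalar lemma
  have main := wielandt_scalar l1 ln nx ny a b t hln_pos hnL hnx0 hny0 ht0
    ha1 ha2 hb1 hb2 h1 h2
  have hLn : (0:ℝ) < (l1 + ln) ^ 2 := pow_pos (by linarith) 2
  rw [hare, hbre]
  rw [div_pow, div_mul_eq_mul_div, div_mul_eq_mul_div, le_div_iff₀ hLn]
  calc t * (l1 + ln) ^ 2 ≤ (l1 - ln) ^ 2 * a * b := main
    _ = (l1 - ln) ^ 2 * a * b := rfl
end

section
/- Let B be an n×n Hermitian positive definite matrix with largest eigenvalue λ₁ and smallest eigenvalue λₙ, and let X be an n×p matrix with X* X = I_p. Then X* B⁻¹ X ≤ ((λ₁ + λₙ)² / (4 λ₁ λₙ)) (X* B X)⁻¹ in the Loewner order. -/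
open Matrix Complex
open scoped ComplexOrder

lemma aux_spectral {n : Type*} [Fintype n] [DecidableEq n]
    (A : Matrix n n ℂ) (hA : A.PosDef) (a b c : ℝ)
    (h : ∀ i, 0 ≤ a + b * hA.isHermitian.eigenvalues i
        + c / hA.isHermitian.eigenvalues i) :
    ((a : ℂ) • (1 : Matrix n n ℂ) + (b : ℂ) • A + (c : ℂ) • A⁻¹).PosSemidef := by
  set hH := hA.isHermitian with hHdef
  set U : Matrix n n ℂ := (hH.eigenvectorUnitary : Matrix n n ℂ) with hU
  set lam := hH.eigenvalues with hlam
  have hpos : ∀ i, 0 < lam i := fun i => hA.eigenvalues_pos i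
  have hne : ∀ i, (lam i : ℂ) ≠ 0 := fun i => by exact_mod_cast (hpos i).ne'
  have hUU : U * star U = 1 := (Matrix.mem_unitaryGroup_iff).mp hH.eigenvectorUnitary.2
  set D : Matrix n n ℂ := diagonal (RCLike.ofReal ∘ lam) with hD
  have hspec : A = U * D * star U := hH.spectral_theorem
  set Dinv : Matrix n n ℂ := diagonal (fun i => ((lam i : ℂ))⁻¹) with hDinv
  have hDDinv : D * Dinv = 1 := by
    rw [hD, hDinv, diagonal_mul_diagonal]
    have : (fun i => (RCLike.ofReal ∘ lam) i * ((lam i : ℂ))⁻¹) = fun _ => (1 : ℂ) :=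
      funext fun i => mul_inv_cancel₀ (hne i)
    rw [this, diagonal_one]
  have hAinv : A⁻¹ = U * Dinv * star U := by
    apply Matrix.inv_eq_right_inv
    calc A * (U * Dinv * star U) = U * D * (star U * U) * Dinv * star U := by
          rw [hspec]; noncomm_ring
      _ = 1 := by
          rw [(Matrix.mem_unitaryGroup_iff').mp hH.eigenvectorUnitary.2]
          rw [mul_one, mul_assoc, mul_assoc, ← mul_assoc D, hDDinv, one_mul, hUU]
  have hcomm : ∀ (M : Matrix n n ℂ) (r : ℝ),
      (r : ℂ) • (U * M * star U) = U * ((r : ℂ) • M) * star U := by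
    intro M r
    rw [Matrix.mul_smul, Matrix.smul_mul]
  have h1 : (1 : Matrix n n ℂ) = U * 1 * star U := by rw [mul_one, hUU]
  have key : (a : ℂ) • (1 : Matrix n n ℂ) + (b : ℂ) • A + (c : ℂ) • A⁻¹
      = U * diagonal (fun i => ((a + b * lam i + c / lam i : ℝ) : ℂ)) * star U := by
    rw [hAinv, hspec, h1, hcomm, hcomm, hcomm, ← Matrix.add_mul, ← Matrix.mul_add,
      ← Matrix.add_mul, ← Matrix.mul_add]
    congr 2
    ext i j
    rcases eq_or_ne i j with rfl | hij
    · simp only [hD, hDinv, Matrix.add_apply, Matrix.smul_apply, diagonal_apply_eq,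
        Matrix.one_apply_eq, Function.comp_apply, smul_eq_mul, mul_one]
      push_cast
      rfl
    · simp [hD, hDinv, diagonal_apply_ne _ hij, Matrix.one_apply_ne hij]
  rw [key]
  have hd : (0 : n → ℂ) ≤ fun i => ((a + b * lam i + c / lam i : ℝ) : ℂ) := by
    intro i
    simpa using Complex.zero_le_real.mpr (h i)
  have := (Matrix.PosSemidef.diagonal hd).mul_mul_conjTranspose_same U
  simpa [Matrix.star_eq_conjTranspose] using this

/-- Kantorovich-type inequality: if `B` is Hermitian positive definite with
largest eigenvalue `λ₁` and smallest eigenvalue `λₙ`, and `X* X = I`, then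
`X* B⁻¹ X ≤ ((λ₁+λₙ)²/(4λ₁λₙ)) (X* B X)⁻¹` in the Loewner order. -/
theorem kantorovich_type_inequality {m p : Type*} [Fintype m] [DecidableEq m]
    [Fintype p] [DecidableEq p]
    (B : Matrix m m ℂ) (hB : B.PosDef)
    (l1 ln : ℝ)
    (hl1 : l1 = ⨆ i, hB.isHermitian.eigenvalues i)
    (hln : ln = ⨅ i, hB.isHermitian.eigenvalues i)
    (X : Matrix m p ℂ) (hX : Xᴴ * X = 1) :
    ((((l1 + ln) ^ 2 / (4 * l1 * ln) : ℝ) : ℂ) • (Xᴴ * B * X)⁻¹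
        - Xᴴ * B⁻¹ * X).PosSemidef := by
  rcases isEmpty_or_nonempty p with hp | hp
  · have h0 : ((((l1 + ln) ^ 2 / (4 * l1 * ln) : ℝ) : ℂ) • (Xᴴ * B * X)⁻¹
        - Xᴴ * B⁻¹ * X) = 0 := Subsingleton.elim _ _
    rw [h0]
    exact Matrix.PosSemidef.zero
  haveI : Nonempty m := by
    by_contra h
    rw [not_nonempty_iff] at h
    obtain ⟨j⟩ := hp
    have := congrFun (congrFun hX j) j
    simp [Matrix.mul_apply, Matrix.one_apply] at this
  set lam := hB.isHermitian.eigenvalues with hlam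
  have hpos : ∀ i, 0 < lam i := fun i => hB.eigenvalues_pos i
  have hle1 : ∀ i, lam i ≤ l1 := fun i =>
    hl1 ▸ le_ciSup (Set.Finite.bddAbove (Set.finite_range _)) i
  have hlen : ∀ i, ln ≤ lam i := fun i =>
    hln ▸ ciInf_le (Set.Finite.bddBelow (Set.finite_range _)) i
  obtain ⟨i0, hi0⟩ := Finite.exists_min lam
  have hln0 : 0 < ln := lt_of_lt_of_le (hpos i0) (hln ▸ le_ciInf hi0)
  have hl10 : 0 < l1 := lt_of_lt_of_le (hpos i0) (hle1 i0)
  -- A := Xᴴ B X is positive definite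
  have hApd : (Xᴴ * B * X).PosDef := by
    refine Matrix.PosDef.of_dotProduct_mulVec_pos (Matrix.isHermitian_conjTranspose_mul_mul X hB.isHermitian) fun x hx => ?_
    have hXx : X *ᵥ x ≠ 0 := by
      intro hc
      have hzz : star x ⬝ᵥ x = 0 := by
        calc star x ⬝ᵥ x = star x ⬝ᵥ ((Xᴴ * X) *ᵥ x) := by rw [hX, one_mulVec]
          _ = star (X *ᵥ x) ⬝ᵥ (X *ᵥ x) := by
              rw [← Matrix.mulVec_mulVec, Matrix.dotProduct_mulVec, Matrix.star_mulVec]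
          _ = 0 := by rw [hc]; simp
      exact hx (dotProduct_star_self_eq_zero.mp hzz)
    have e : star x ⬝ᵥ ((Xᴴ * B * X) *ᵥ x) = star (X *ᵥ x) ⬝ᵥ (B *ᵥ (X *ᵥ x)) := by
      rw [← Matrix.mulVec_mulVec, ← Matrix.mulVec_mulVec, Matrix.dotProduct_mulVec,
        Matrix.star_mulVec, ← Matrix.dotProduct_mulVec]
    rw [e]
    exact hB.dotProduct_mulVec_pos hXx
  have h1 := aux_spectral B hB ((l1 + ln) / (l1 * ln)) (-(1 / (l1 * ln))) (-1) (by
    intro i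
    have hli := hpos i
    have e : (l1 + ln) / (l1 * ln) + (-(1 / (l1 * ln))) * lam i + (-1) / lam i
        = ((l1 - lam i) * (lam i - ln)) / (l1 * ln * lam i) := by
      field_simp
      ring
    rw [e]
    exact div_nonneg (mul_nonneg (by linarith [hle1 i]) (by linarith [hlen i]))
      (by positivity))
  have h2 := h1.conjTranspose_mul_mul_same X
  have h3 := aux_spectral (Xᴴ * B * X) hApd (-((l1 + ln) / (l1 * ln))) (1 / (l1 * ln))
      ((l1 + ln) ^ 2 / (4 * l1 * ln)) (by
    intro j
    have hμ := hApd.eigenvalues_pos j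
    set μ := hApd.isHermitian.eigenvalues j
    have e : -((l1 + ln) / (l1 * ln)) + (1 / (l1 * ln)) * μ
        + ((l1 + ln) ^ 2 / (4 * l1 * ln)) / μ
        = (2 * μ - (l1 + ln)) ^ 2 / (4 * l1 * ln * μ) := by
      field_simp
      ring
    rw [e]
    exact div_nonneg (sq_nonneg _) (by positivity))
  have h4 := h2.add h3
  have expand : Xᴴ * ((((l1 + ln) / (l1 * ln) : ℝ) : ℂ) • 1
        + ((-(1 / (l1 * ln)) : ℝ) : ℂ) • B + ((-1 : ℝ) : ℂ) • B⁻¹) * X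
      = (((l1 + ln) / (l1 * ln) : ℝ) : ℂ) • (1 : Matrix p p ℂ)
        + ((-(1 / (l1 * ln)) : ℝ) : ℂ) • (Xᴴ * B * X)
        + ((-1 : ℝ) : ℂ) • (Xᴴ * B⁻¹ * X) := by
    rw [Matrix.mul_add, Matrix.mul_add, Matrix.add_mul, Matrix.add_mul,
      Matrix.mul_smul, Matrix.mul_smul, Matrix.mul_smul,
      Matrix.smul_mul, Matrix.smul_mul, Matrix.smul_mul,
      Matrix.mul_one, hX, Matrix.mul_assoc, Matrix.mul_assoc]
  rw [expand] at h4
  have final : (((l1 + ln) ^ 2 / (4 * l1 * ln) : ℝ) : ℂ) • (Xᴴ * B * X)⁻¹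
        - Xᴴ * B⁻¹ * X
      = ((((l1 + ln) / (l1 * ln) : ℝ) : ℂ) • (1 : Matrix p p ℂ)
        + ((-(1 / (l1 * ln)) : ℝ) : ℂ) • (Xᴴ * B * X)
        + ((-1 : ℝ) : ℂ) • (Xᴴ * B⁻¹ * X))
        + (((-((l1 + ln) / (l1 * ln)) : ℝ) : ℂ) • (1 : Matrix p p ℂ)
        + (((1 / (l1 * ln)) : ℝ) : ℂ) • (Xᴴ * B * X)
        + (((l1 + ln) ^ 2 / (4 * l1 * ln) : ℝ) : ℂ) • (Xᴴ * B * X)⁻¹) := by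
    push_cast
    module
  rw [final]
  exact h4
end

section
/- Let B = [[B₁₁, B₁₂],[B₂₁, B₂₂]] be an n×n Hermitian positive definite matrix where B₂₂ is a k×k principal block. Then B₂₁ B₁₁⁻¹ B₁₂ ≤ ((1 − κ(B))/(1 + κ(B)))² B₂₂ in the Loewner order, where κ(B) is the spectral condition number of B. -/
open Matrix Complex
open scoped ComplexOrder

lemma herm_dot_real {m : Type*} [Fintype m] {A : Matrix m m ℂ} (hA : A.IsHermitian)
    (z : m → ℂ) : star z ⬝ᵥ A *ᵥ z = (((star z ⬝ᵥ A *ᵥ z).re : ℝ) : ℂ) := by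
  rw [eq_comm, ← Complex.conj_eq_iff_re]
  calc (starRingEnd ℂ) (star z ⬝ᵥ A *ᵥ z) = star (star z ⬝ᵥ A *ᵥ z) := rfl
    _ = star (A *ᵥ z) ⬝ᵥ z := by rw [star_dotProduct, star_star]
    _ = (star z ᵥ* Aᴴ) ⬝ᵥ z := by rw [star_mulVec]
    _ = star z ⬝ᵥ A *ᵥ z := by rw [hA.eq, ← dotProduct_mulVec]

lemma dot_flip {m k : Type*} [Fintype m] [Fintype k] (M : Matrix m k ℂ) (u : m → ℂ)
    (x : k → ℂ) : star (star u ⬝ᵥ M *ᵥ x) = star x ⬝ᵥ Mᴴ *ᵥ u := by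
  rw [star_dotProduct, star_star, star_mulVec, ← dotProduct_mulVec]

lemma rayleigh_bounds {m : Type*} [Fintype m] [DecidableEq m] [Nonempty m]
    {A : Matrix m m ℂ} (hA : A.IsHermitian) (z : m → ℂ) :
    (⨅ i, hA.eigenvalues i) * (star z ⬝ᵥ z).re ≤ (star z ⬝ᵥ A *ᵥ z).re ∧
      (star z ⬝ᵥ A *ᵥ z).re ≤ (⨆ i, hA.eigenvalues i) * (star z ⬝ᵥ z).re := by
  classical
  set U := (hA.eigenvectorUnitary : Matrix m m ℂ) with hU
  set w := star U *ᵥ z with hw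
  have hvm : star z ᵥ* U = star w := by
    rw [hw, star_mulVec, star_eq_conjTranspose, conjTranspose_conjTranspose]
  have h1 : star z ⬝ᵥ A *ᵥ z = star w ⬝ᵥ (diagonal (RCLike.ofReal ∘ hA.eigenvalues) *ᵥ w) := by
    conv_lhs => rw [hA.spectral_theorem, Unitary.conjStarAlgAut_apply]
    rw [← mulVec_mulVec, ← mulVec_mulVec, dotProduct_mulVec, hvm, ← hw]
  have h2 : star z ⬝ᵥ z = star w ⬝ᵥ w := by
    rw [← hvm, ← dotProduct_mulVec, hw, mulVec_mulVec,
      (Matrix.mem_unitaryGroup_iff).mp hA.eigenvectorUnitary.2, one_mulVec]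
  have h1' : (star z ⬝ᵥ A *ᵥ z).re = ∑ i, hA.eigenvalues i * Complex.normSq (w i) := by
    rw [h1, dotProduct, Complex.re_sum]
    refine Finset.sum_congr rfl fun i _ => ?_
    simp [mulVec_diagonal, Complex.normSq_apply]
    ring
  have h2' : (star z ⬝ᵥ z).re = ∑ i, Complex.normSq (w i) := by
    rw [h2, dotProduct, Complex.re_sum]
    refine Finset.sum_congr rfl fun i _ => ?_
    simp [Complex.normSq_apply]
  have hbdd : BddAbove (Set.range hA.eigenvalues) := (Set.finite_range _).bddAbove
  have hbdd' : BddBelow (Set.range hA.eigenvalues) := (Set.finite_range _).bddBelow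
  constructor
  · rw [h1', h2', Finset.mul_sum]
    exact Finset.sum_le_sum fun i _ => mul_le_mul_of_nonneg_right
      (ciInf_le hbdd' i) (Complex.normSq_nonneg _)
  · rw [h1', h2', Finset.mul_sum]
    exact Finset.sum_le_sum fun i _ => mul_le_mul_of_nonneg_right
      (le_ciSup hbdd i) (Complex.normSq_nonneg _)


/-- The spectral condition number of a Hermitian matrix: the ratio of its
largest to its smallest eigenvalue. -/
noncomputable def condNum {m : Type*} [Fintype m] [DecidableEq m]
    {M : Matrix m m ℂ} (hM : M.IsHermitian) : ℝ :=
  (⨆ i, hM.eigenvalues i) / (⨅ i, hM.eigenvalues i)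

set_option maxHeartbeats 1000000

/-- If `B = [[B₁₁, B₁₂], [B₂₁, B₂₂]]` is Hermitian positive definite, then
`B₂₁ B₁₁⁻¹ B₁₂ ≤ ((1-κ(B))/(1+κ(B)))² B₂₂` in the Loewner order. -/
theorem schur_block_bound {p q : Type*} [Fintype p] [DecidableEq p]
    [Fintype q] [DecidableEq q] [Nonempty p] [Nonempty q]
    (B11 : Matrix p p ℂ) (B12 : Matrix p q ℂ) (B21 : Matrix q p ℂ) (B22 : Matrix q q ℂ)
    (hB : (Matrix.fromBlocks B11 B12 B21 B22).PosDef) :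
    ((((1 - condNum hB.isHermitian) / (1 + condNum hB.isHermitian)) ^ 2 : ℂ) • B22
        - B21 * B11⁻¹ * B12).PosSemidef := by
  classical
  haveI : Nonempty (p ⊕ q) := ⟨Sum.inl (Classical.arbitrary p)⟩
  have hH := hB.isHermitian
  obtain ⟨h11, h12c, h21c, h22⟩ := isHermitian_fromBlocks_iff.mp hH
  set ev := hB.isHermitian.eigenvalues with hev
  set lam := ⨆ i, ev i with hlam
  set mu := ⨅ i, ev i with hmu
  have hbddA : BddAbove (Set.range ev) := (Set.finite_range _).bddAbove
  have hbddB : BddBelow (Set.range ev) := (Set.finite_range _).bddBelow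
  have hmu_le : ∀ i, mu ≤ ev i := fun i => ciInf_le hbddB i
  have hle_lam : ∀ i, ev i ≤ lam := fun i => le_ciSup hbddA i
  have hmu_pos : 0 < mu := by
    obtain ⟨i0, hi0⟩ := Finite.exists_min ev
    exact lt_of_lt_of_le (hB.eigenvalues_pos i0) (le_ciInf hi0)
  have hml : mu ≤ lam := (hmu_le (Classical.arbitrary _)).trans (hle_lam _)
  have hlam_pos : 0 < lam := hmu_pos.trans_le hml
  set c : ℝ := ((lam - mu) / (lam + mu)) ^ 2 with hcdef
  have hsum_pos : 0 < lam + mu := by linarith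
  have hc : (((1 - condNum hB.isHermitian) / (1 + condNum hB.isHermitian)) ^ 2 : ℂ)
      = (c : ℂ) := by
    have h1 : condNum hB.isHermitian = lam / mu := rfl
    have hmu0 : mu ≠ 0 := ne_of_gt hmu_pos
    have hs0 : lam + mu ≠ 0 := ne_of_gt hsum_pos
    have hne : (1 : ℝ) + lam / mu ≠ 0 := by
      have : (1 : ℝ) + lam / mu = (lam + mu) / mu := by field_simp; ring
      rw [this]
      positivity
    have h2 : ((1 - lam / mu) / (1 + lam / mu)) ^ 2 = c := by
      rw [hcdef]
      field_simp
      ring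
    rw [h1, ← h2]
    push_cast
    ring
  rw [hc]
  -- positive definiteness of the diagonal blocks
  have hB11 : B11.PosDef := by
    refine PosDef.of_dotProduct_mulVec_pos h11 fun x hx => ?_
    have hx' : Sum.elim x (0 : q → ℂ) ≠ 0 := by
      intro h
      exact hx (funext fun i => congrFun h (Sum.inl i))
    have := hB.dotProduct_mulVec_pos hx'
    simpa [Function.star_sumElim, fromBlocks_mulVec, sumElim_dotProduct_sumElim] using this
  have hB22 : B22.PosDef := by
    refine PosDef.of_dotProduct_mulVec_pos h22 fun x hx => ?_
    have hx' : Sum.elim (0 : p → ℂ) x ≠ 0 := by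
      intro h
      exact hx (funext fun i => congrFun h (Sum.inr i))
    have := hB.dotProduct_mulVec_pos hx'
    simpa [Function.star_sumElim, fromBlocks_mulVec, sumElim_dotProduct_sumElim] using this
  have hP : (B21 * B11⁻¹ * B12).PosSemidef := by
    rw [← h12c]
    exact hB11.inv.posSemidef.conjTranspose_mul_mul_same B12
  have hc0 : (0 : ℝ) ≤ c := sq_nonneg _
  rw [posSemidef_iff_dotProduct_mulVec]
  constructor
  · show ((c : ℂ) • B22 - B21 * B11⁻¹ * B12)ᴴ = _
    rw [conjTranspose_sub, conjTranspose_smul, h22.eq, hP.1.eq, Complex.star_def,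
      Complex.conj_ofReal]
  intro x
  set P := B21 * B11⁻¹ * B12 with hPdef
  set β := (star x ⬝ᵥ B22 *ᵥ x).re with hβdef
  set α := (star x ⬝ᵥ P *ᵥ x).re with hαdef
  have hβ : star x ⬝ᵥ B22 *ᵥ x = (β : ℂ) := herm_dot_real h22 x
  have hα : star x ⬝ᵥ P *ᵥ x = (α : ℂ) := herm_dot_real hP.1 x
  have hβ0 : (0 : ℝ) ≤ β := Complex.zero_le_real.mp (hβ ▸ hB22.posSemidef.dotProduct_mulVec_nonneg x)
  have hα0 : (0 : ℝ) ≤ α := Complex.zero_le_real.mp (hα ▸ hP.dotProduct_mulVec_nonneg x)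
  have expand : star x ⬝ᵥ ((c : ℂ) • B22 - P) *ᵥ x
      = ((c * β - α : ℝ) : ℂ) := by
    rw [sub_mulVec, smul_mulVec, dotProduct_sub, dotProduct_smul, hβ, hα, smul_eq_mul]
    push_cast
    ring
  rw [expand, Complex.zero_le_real, sub_nonneg]
  -- the key inequality α ≤ c * β
  set u := B11⁻¹ *ᵥ (B12 *ᵥ x) with hudef
  have hBu : B11 *ᵥ u = B12 *ᵥ x := by
    rw [hudef, mulVec_mulVec, mul_nonsing_inv _ ((isUnit_iff_isUnit_det _).mp hB11.isUnit),
      one_mulVec]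
  have hPu : P *ᵥ x = B21 *ᵥ u := by
    rw [hPdef, hudef, ← mulVec_mulVec, ← mulVec_mulVec]
  have ha3 : star x ⬝ᵥ B21 *ᵥ u = (α : ℂ) := by rw [← hPu, hα]
  have ha1 : star u ⬝ᵥ B12 *ᵥ x = (α : ℂ) := by
    have := dot_flip B12 u x
    rw [h12c, ha3] at this
    calc star u ⬝ᵥ B12 *ᵥ x = star (star (star u ⬝ᵥ B12 *ᵥ x)) := (star_star _).symm
      _ = star ((α : ℂ)) := by rw [this]
      _ = (α : ℂ) := by rw [Complex.star_def, Complex.conj_ofReal]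
  have ha2 : star u ⬝ᵥ B11 *ᵥ u = (α : ℂ) := by rw [hBu, ha1]
  set n1 := (star u ⬝ᵥ u).re with hn1def
  set n2 := (star x ⬝ᵥ x).re with hn2def
  -- quadratic form computations along the family z t = (t • u, x)
  have hq : ∀ t : ℝ,
      (star (Sum.elim ((t : ℂ) • u) x) ⬝ᵥ
          (fromBlocks B11 B12 B21 B22) *ᵥ Sum.elim ((t : ℂ) • u) x).re
        = t ^ 2 * α + 2 * t * α + β ∧
      (star (Sum.elim ((t : ℂ) • u) x) ⬝ᵥ Sum.elim ((t : ℂ) • u) x).re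
        = t ^ 2 * n1 + n2 := by
    intro t
    constructor
    · have : star (Sum.elim ((t : ℂ) • u) x) ⬝ᵥ
          (fromBlocks B11 B12 B21 B22) *ᵥ Sum.elim ((t : ℂ) • u) x
          = ((t ^ 2 * α + 2 * t * α + β : ℝ) : ℂ) := by
        rw [fromBlocks_mulVec, Function.star_sumElim, sumElim_dotProduct_sumElim]
        simp only [Sum.elim_comp_inl, Sum.elim_comp_inr]
        rw [star_smul, mulVec_smul, mulVec_smul]
        simp only [dotProduct_add, dotProduct_smul, smul_dotProduct, smul_eq_mul,
          Complex.star_def, Complex.conj_ofReal]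
        rw [ha1, ha2, ha3, hβ]
        push_cast
        ring
      rw [this, Complex.ofReal_re]
    · have : star (Sum.elim ((t : ℂ) • u) x) ⬝ᵥ Sum.elim ((t : ℂ) • u) x
          = ((t ^ 2 * n1 + n2 : ℝ) : ℂ) := by
        rw [Function.star_sumElim, sumElim_dotProduct_sumElim, star_smul]
        simp only [smul_dotProduct, dotProduct_smul, smul_eq_mul, Complex.star_def,
          Complex.conj_ofReal]
        have hr1 : star u ⬝ᵥ u = ((n1 : ℝ) : ℂ) := by
          rw [hn1def, eq_comm, ← Complex.conj_eq_iff_re]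
          rw [show (starRingEnd ℂ) (star u ⬝ᵥ u) = star (star u ⬝ᵥ u) from rfl]
          exact (star_dotProduct u u).symm
        have hr2 : star x ⬝ᵥ x = ((n2 : ℝ) : ℂ) := by
          rw [hn2def, eq_comm, ← Complex.conj_eq_iff_re]
          rw [show (starRingEnd ℂ) (star x ⬝ᵥ x) = star (star x ⬝ᵥ x) from rfl]
          exact (star_dotProduct x x).symm
        rw [hr1, hr2]
        push_cast
        ring
      rw [this, Complex.ofReal_re]
  -- Rayleigh quotient bounds give a quadratic inequality in t
  have hquad : ∀ t : ℝ, 0 ≤ ((lam - mu) * α) * (t * t)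
      + (-(2 * (lam + mu) * α)) * t + (lam - mu) * β := by
    intro t
    obtain ⟨hQ1, hN1⟩ := hq t
    obtain ⟨hQ2, hN2⟩ := hq (-t)
    have hray1 := (rayleigh_bounds hB.isHermitian (Sum.elim ((t : ℂ) • u) x)).2
    have hray2 := (rayleigh_bounds hB.isHermitian (Sum.elim (((-t : ℝ) : ℂ) • u) x)).1
    rw [← hev, ← hlam, hQ1, hN1] at hray1
    rw [← hev, ← hmu, hQ2, hN2] at hray2
    nlinarith [mul_le_mul_of_nonneg_left hray1 hmu_pos.le,
      mul_le_mul_of_nonneg_left hray2 hlam_pos.le]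
  have hd := discrim_le_zero hquad
  rw [discrim] at hd
  rcases hα0.eq_or_lt with h0 | hpos
  · rw [← h0]
    exact mul_nonneg hc0 hβ0
  · rw [hcdef, div_pow, div_mul_eq_mul_div, le_div_iff₀ (by positivity)]
    have h4 : 4 * α * (α * (lam + mu) ^ 2) ≤ 4 * α * ((lam - mu) ^ 2 * β) := by
      linarith [hd]
    exact le_of_mul_le_mul_left h4 (by positivity)
end

section
/- Let A = B + iC with B = B*, C = C* be partitioned into 2×2 blocks conformally, with B₁₁ and C₁₁ invertible and A₁₁ invertible. Then the Schur complement satisfies A/A₁₁ = B/B₁₁ + i(C/C₁₁) + X (B₁₁⁻¹ − i C₁₁⁻¹)⁻¹ X*, where X = B₂₁ B₁₁⁻¹ − C₂₁ C₁₁⁻¹. -/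
open Matrix Complex

lemma core_aux' {p q : Type*} [Fintype p] [DecidableEq p] [Fintype q] [DecidableEq q]
    (b11 c11 : Matrix p p ℂ) (b21 c21 : Matrix q p ℂ) (b12 c12 : Matrix p q ℂ)
    (hb : IsUnit b11.det) (hc : IsUnit c11.det)
    (ha : IsUnit (b11 + Complex.I • c11).det) :
    (b21 + Complex.I • c21) * (b11 + Complex.I • c11)⁻¹ * (b12 + Complex.I • c12)
      = b21 * b11⁻¹ * b12 + Complex.I • (c21 * c11⁻¹ * c12)
        - (b21 * b11⁻¹ - c21 * c11⁻¹) *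
            (Complex.I • (c11 * (b11 + Complex.I • c11)⁻¹ * b11)) *
            (b11⁻¹ * b12 - c11⁻¹ * c12) := by
  set a := b11 + Complex.I • c11 with ha_def
  have r3 : ∀ x : Matrix p q ℂ, c11⁻¹ * (c11 * x) = x := fun x =>
    nonsing_inv_mul_cancel_left _ _ hc
  have r4 : ∀ x : Matrix p q ℂ, b11⁻¹ * (b11 * x) = x := fun x =>
    nonsing_inv_mul_cancel_left _ _ hb
  have r5 : ∀ x : Matrix p q ℂ, b11 * (b11⁻¹ * x) = x := fun x =>
    mul_nonsing_inv_cancel_left _ _ hb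
  have r6 : ∀ x : Matrix p q ℂ, c11 * (c11⁻¹ * x) = x := fun x =>
    mul_nonsing_inv_cancel_left _ _ hc
  have r1 : ∀ x : Matrix p q ℂ,
      b11⁻¹ * (c11 * (a⁻¹ * x)) = Complex.I • (a⁻¹ * x) - Complex.I • (b11⁻¹ * x) := by
    intro x
    have hI : Complex.I • (b11⁻¹ * (c11 * (a⁻¹ * x))) = b11⁻¹ * x - a⁻¹ * x := by
      calc Complex.I • (b11⁻¹ * (c11 * (a⁻¹ * x)))
          = b11⁻¹ * ((Complex.I • c11) * (a⁻¹ * x)) := by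
            simp only [Matrix.mul_smul, Matrix.smul_mul]
        _ = b11⁻¹ * ((a - b11) * (a⁻¹ * x)) := by
            rw [ha_def, add_sub_cancel_left]
        _ = b11⁻¹ * (a * (a⁻¹ * x)) - b11⁻¹ * (b11 * (a⁻¹ * x)) := by
            simp only [Matrix.sub_mul, Matrix.mul_sub]
        _ = b11⁻¹ * x - a⁻¹ * x := by
            rw [mul_nonsing_inv_cancel_left _ _ ha, r4]
    calc b11⁻¹ * (c11 * (a⁻¹ * x))
        = (-Complex.I) • (Complex.I • (b11⁻¹ * (c11 * (a⁻¹ * x)))) := by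
          rw [smul_smul]; simp
      _ = Complex.I • (a⁻¹ * x) - Complex.I • (b11⁻¹ * x) := by
          rw [hI, smul_sub, neg_smul, neg_smul, sub_neg_eq_add, neg_add_eq_sub]
  have r2 : ∀ x : Matrix p q ℂ,
      a⁻¹ * (b11 * (c11⁻¹ * x)) = c11⁻¹ * x - Complex.I • (a⁻¹ * x) := by
    intro x
    have hb11 : b11 = a - Complex.I • c11 := by rw [ha_def, add_sub_cancel_right]
    calc a⁻¹ * (b11 * (c11⁻¹ * x))
        = a⁻¹ * (a * (c11⁻¹ * x)) - Complex.I • (a⁻¹ * (c11 * (c11⁻¹ * x))) := by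
          rw [hb11]; simp only [Matrix.sub_mul, Matrix.mul_sub, Matrix.smul_mul, Matrix.mul_smul]
      _ = c11⁻¹ * x - Complex.I • (a⁻¹ * x) := by
          rw [nonsing_inv_mul_cancel_left _ _ ha, mul_nonsing_inv_cancel_left _ _ hc]
  simp only [Matrix.mul_sub, Matrix.sub_mul, Matrix.mul_add, Matrix.add_mul,
    Matrix.smul_mul, Matrix.mul_smul, Matrix.mul_assoc, smul_sub, smul_add, smul_smul,
    r1, r2, r3, r4, r5, r6, Matrix.mul_neg, Matrix.neg_mul, smul_neg, Complex.I_mul_I, neg_smul, one_smul, neg_neg, mul_neg,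
    neg_one_smul]
  module

lemma Minv_aux' {p : Type*} [Fintype p] [DecidableEq p]
    (b11 c11 : Matrix p p ℂ) (hb : IsUnit b11.det) (hc : IsUnit c11.det)
    (ha : IsUnit (b11 + Complex.I • c11).det) :
    (b11⁻¹ - Complex.I • c11⁻¹)⁻¹
      = Complex.I • (c11 * (b11 + Complex.I • c11)⁻¹ * b11) := by
  set a := b11 + Complex.I • c11 with ha_def
  apply inv_eq_right_inv
  have key : b11⁻¹ * (c11 * (a⁻¹ * b11))
      = Complex.I • (a⁻¹ * b11) - Complex.I • (b11⁻¹ * b11) := by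
    have hI : Complex.I • (b11⁻¹ * (c11 * (a⁻¹ * b11))) = b11⁻¹ * b11 - a⁻¹ * b11 := by
      calc Complex.I • (b11⁻¹ * (c11 * (a⁻¹ * b11)))
          = b11⁻¹ * ((Complex.I • c11) * (a⁻¹ * b11)) := by
            simp only [Matrix.mul_smul, Matrix.smul_mul]
        _ = b11⁻¹ * ((a - b11) * (a⁻¹ * b11)) := by
            rw [ha_def, add_sub_cancel_left]
        _ = b11⁻¹ * (a * (a⁻¹ * b11)) - b11⁻¹ * (b11 * (a⁻¹ * b11)) := by
            simp only [Matrix.sub_mul, Matrix.mul_sub]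
        _ = b11⁻¹ * b11 - a⁻¹ * b11 := by
            rw [mul_nonsing_inv_cancel_left _ _ ha, nonsing_inv_mul_cancel_left _ _ hb]
    calc b11⁻¹ * (c11 * (a⁻¹ * b11))
        = (-Complex.I) • (Complex.I • (b11⁻¹ * (c11 * (a⁻¹ * b11)))) := by
          rw [smul_smul]; simp
      _ = Complex.I • (a⁻¹ * b11) - Complex.I • (b11⁻¹ * b11) := by
          rw [hI, smul_sub, neg_smul, neg_smul, sub_neg_eq_add, neg_add_eq_sub]
  have hcc : ∀ x : Matrix p p ℂ, c11⁻¹ * (c11 * x) = x := fun x =>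
    nonsing_inv_mul_cancel_left _ _ hc
  simp only [Matrix.sub_mul, Matrix.smul_mul, Matrix.mul_smul, Matrix.mul_assoc,
    smul_smul, key, hcc, Matrix.nonsing_inv_mul _ hb, smul_sub, Complex.I_mul_I,
    neg_smul, one_smul, neg_neg, smul_neg, neg_one_smul, sub_neg_eq_add]
  module

/-- Schur complement formula for the Hermitian (Toeplitz) decomposition:
if `A = B + iC` with `B`, `C` Hermitian, partitioned conformally into 2×2
blocks with `B₁₁`, `C₁₁`, `A₁₁` invertible, then
`A/A₁₁ = B/B₁₁ + i (C/C₁₁) + X (B₁₁⁻¹ - i C₁₁⁻¹)⁻¹ X*` where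
`X = B₂₁ B₁₁⁻¹ - C₂₁ C₁₁⁻¹`. -/
theorem schur_complement_hermitian_decomposition {p q : Type*}
    [Fintype p] [DecidableEq p] [Fintype q] [DecidableEq q]
    (A11 : Matrix p p ℂ) (A12 : Matrix p q ℂ) (A21 : Matrix q p ℂ) (A22 : Matrix q q ℂ)
    (B11 : Matrix p p ℂ) (B12 : Matrix p q ℂ) (B21 : Matrix q p ℂ) (B22 : Matrix q q ℂ)
    (C11 : Matrix p p ℂ) (C12 : Matrix p q ℂ) (C21 : Matrix q p ℂ) (C22 : Matrix q q ℂ)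
    (hB : (Matrix.fromBlocks B11 B12 B21 B22).IsHermitian)
    (hC : (Matrix.fromBlocks C11 C12 C21 C22).IsHermitian)
    (hA : Matrix.fromBlocks A11 A12 A21 A22 =
      Matrix.fromBlocks B11 B12 B21 B22 + Complex.I • Matrix.fromBlocks C11 C12 C21 C22)
    (h11B : IsUnit B11) (h11C : IsUnit C11) (h11A : IsUnit A11) :
    A22 - A21 * A11⁻¹ * A12 =
      (B22 - B21 * B11⁻¹ * B12) + Complex.I • (C22 - C21 * C11⁻¹ * C12) +
        (B21 * B11⁻¹ - C21 * C11⁻¹) * (B11⁻¹ - Complex.I • C11⁻¹)⁻¹ *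
          (B21 * B11⁻¹ - C21 * C11⁻¹)ᴴ := by
  have hB' : _ = _ := hB
  have hC' : _ = _ := hC
  rw [fromBlocks_conjTranspose, fromBlocks_inj] at hB' hC'
  obtain ⟨hB11, hB12, -, -⟩ := hB'
  obtain ⟨hC11, hC12, -, -⟩ := hC'
  rw [Matrix.fromBlocks_smul, Matrix.fromBlocks_add, fromBlocks_inj] at hA
  obtain ⟨hA11, hA12, hA21, hA22⟩ := hA
  subst hA11 hA12 hA21 hA22
  have hb : IsUnit B11.det := (isUnit_iff_isUnit_det _).mp h11B
  have hc : IsUnit C11.det := (isUnit_iff_isUnit_det _).mp h11C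
  have ha : IsUnit (B11 + Complex.I • C11).det := (isUnit_iff_isUnit_det _).mp h11A
  have hX : (B21 * B11⁻¹ - C21 * C11⁻¹)ᴴ = B11⁻¹ * B12 - C11⁻¹ * C12 := by
    simp [conjTranspose_sub, conjTranspose_mul, conjTranspose_nonsing_inv,
      hB11, hC11, hB12, hC12]
  rw [hX, Minv_aux' B11 C11 hb hc ha, core_aux' B11 C11 B21 C21 B12 C12 hb hc ha]
  simp only [smul_sub]
  abel
end

section
/- Let A = B + iC be a generalized Higham matrix (B, C Hermitian positive definite), partitioned into 2×2 blocks conformally. If A/A₁₁ = R + iS is the Hermitian decomposition of the Schur complement, then R ≥ B/B₁₁ and S ≥ C/C₁₁ in the Loewner order. -/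
open Matrix Complex
open scoped ComplexOrder

section Aux

variable {p q : Type*} [Fintype p] [DecidableEq p] [Fintype q] [DecidableEq q]

omit [DecidableEq p] [DecidableEq q] in
lemma posDef_block11' {M11 : Matrix p p ℂ} {M12 : Matrix p q ℂ} {M21 : Matrix q p ℂ}
    {M22 : Matrix q q ℂ} (h : (Matrix.fromBlocks M11 M12 M21 M22).PosDef) : M11.PosDef := by
  refine Matrix.PosDef.of_dotProduct_mulVec_pos (Matrix.isHermitian_fromBlocks_iff.mp h.1).1 fun x hx => ?_
  have hne : (Sum.elim x (0 : q → ℂ)) ≠ 0 := by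
    intro hc
    exact hx (funext fun i => congrFun hc (Sum.inl i))
  have := h.dotProduct_mulVec_pos hne
  simpa [Function.star_sumElim, fromBlocks_mulVec, sumElim_dotProduct_sumElim] using this

lemma conj_quad {n : Type*} [Fintype n] {M : Matrix n n ℂ} (hM : M.IsHermitian) (v : n → ℂ) :
    star (star v ⬝ᵥ M *ᵥ v) = star v ⬝ᵥ M *ᵥ v := by
  conv_lhs => rw [star_dotProduct, star_star, star_mulVec, hM.eq, ← dotProduct_mulVec]

end Aux

/-- For a generalized Higham matrix `A = B + iC` (with `B`, `C` Hermitian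
positive definite), partitioned conformally into 2×2 blocks, if
`A/A₁₁ = R + iS` is the Hermitian decomposition of the Schur complement, then
`R ≥ B/B₁₁` and `S ≥ C/C₁₁` in the Loewner order. -/
theorem schur_complement_parts_ge {p q : Type*}
    [Fintype p] [DecidableEq p] [Fintype q] [DecidableEq q]
    (A11 : Matrix p p ℂ) (A12 : Matrix p q ℂ) (A21 : Matrix q p ℂ) (A22 : Matrix q q ℂ)
    (B11 : Matrix p p ℂ) (B12 : Matrix p q ℂ) (B21 : Matrix q p ℂ) (B22 : Matrix q q ℂ)
    (C11 : Matrix p p ℂ) (C12 : Matrix p q ℂ) (C21 : Matrix q p ℂ) (C22 : Matrix q q ℂ)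
    (hB : (Matrix.fromBlocks B11 B12 B21 B22).PosDef)
    (hC : (Matrix.fromBlocks C11 C12 C21 C22).PosDef)
    (hA : Matrix.fromBlocks A11 A12 A21 A22 =
      Matrix.fromBlocks B11 B12 B21 B22 + Complex.I • Matrix.fromBlocks C11 C12 C21 C22)
    (h11A : IsUnit A11)
    (R S : Matrix q q ℂ) (hR : R.IsHermitian) (hS : S.IsHermitian)
    (hRS : A22 - A21 * A11⁻¹ * A12 = R + Complex.I • S) :
    (R - (B22 - B21 * B11⁻¹ * B12)).PosSemidef ∧
      (S - (C22 - C21 * C11⁻¹ * C12)).PosSemidef := by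
  -- block facts
  have hBd := Matrix.isHermitian_fromBlocks_iff.mp hB.1
  have hCd := Matrix.isHermitian_fromBlocks_iff.mp hC.1
  have hB21 : B21 = B12ᴴ := hBd.2.1.symm
  have hC21 : C21 = C12ᴴ := hCd.2.1.symm
  have hB11 : B11.PosDef := posDef_block11' hB
  have hC11 : C11.PosDef := posDef_block11' hC
  haveI : Invertible B11 := B11.invertibleOfIsUnitDet ((Matrix.isUnit_iff_isUnit_det _).mp hB11.isUnit)
  haveI : Invertible C11 := C11.invertibleOfIsUnitDet ((Matrix.isUnit_iff_isUnit_det _).mp hC11.isUnit)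
  have hdA : IsUnit A11.det := (Matrix.isUnit_iff_isUnit_det _).mp h11A
  -- Schur complements of B and C are Hermitian
  have hSchurB : (B22 - B21 * B11⁻¹ * B12).IsHermitian := by
    rw [hB21]
    exact (Matrix.IsHermitian.fromBlocks₁₁ B12 B22 hBd.1).mp (by rw [← hB21]; exact hB.1)
  have hSchurC : (C22 - C21 * C11⁻¹ * C12).IsHermitian := by
    rw [hC21]
    exact (Matrix.IsHermitian.fromBlocks₁₁ C12 C22 hCd.1).mp (by rw [← hC21]; exact hC.1)
  -- The main pointwise inequality
  have key : ∀ u : q → ℂ,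
      star u ⬝ᵥ ((B22 - B21 * B11⁻¹ * B12) *ᵥ u) ≤ star u ⬝ᵥ (R *ᵥ u) ∧
      star u ⬝ᵥ ((C22 - C21 * C11⁻¹ * C12) *ᵥ u) ≤ star u ⬝ᵥ (S *ᵥ u) := by
    intro u
    set x : p → ℂ := -((A11⁻¹ * A12) *ᵥ u) with hxdef
    set w : p ⊕ q → ℂ := Sum.elim x u with hwdef
    -- quadratic form of A at w equals that of the Schur complement at u
    have hx : A11 *ᵥ x + A12 *ᵥ u = 0 := by
      simp only [hxdef, Matrix.mulVec_neg, Matrix.mulVec_mulVec]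
      rw [Matrix.mul_nonsing_inv_cancel_left _ _ hdA, neg_add_cancel]
    have hy : A21 *ᵥ x + A22 *ᵥ u = (A22 - A21 * A11⁻¹ * A12) *ᵥ u := by
      simp only [hxdef, Matrix.mulVec_neg, Matrix.mulVec_mulVec, Matrix.sub_mulVec]
      rw [← Matrix.mul_assoc]
      abel
    have hkeyA : star w ⬝ᵥ ((Matrix.fromBlocks A11 A12 A21 A22) *ᵥ w)
        = star u ⬝ᵥ ((A22 - A21 * A11⁻¹ * A12) *ᵥ u) := by
      rw [hwdef, Matrix.fromBlocks_mulVec]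
      simp only [Sum.elim_comp_inl, Sum.elim_comp_inr]
      rw [hx, hy, Function.star_sumElim, sumElim_dotProduct_sumElim]
      simp
    -- abbreviations
    set QB := star w ⬝ᵥ ((Matrix.fromBlocks B11 B12 B21 B22) *ᵥ w) with hQB
    set QC := star w ⬝ᵥ ((Matrix.fromBlocks C11 C12 C21 C22) *ᵥ w) with hQC
    set qR := star u ⬝ᵥ (R *ᵥ u) with hqR
    set qS := star u ⬝ᵥ (S *ᵥ u) with hqS
    have h1 : QB + Complex.I * QC = qR + Complex.I * qS := by
      have lhs : star w ⬝ᵥ ((Matrix.fromBlocks A11 A12 A21 A22) *ᵥ w)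
          = QB + Complex.I * QC := by
        rw [hA, Matrix.add_mulVec, Matrix.smul_mulVec, dotProduct_add,
          dotProduct_smul, smul_eq_mul]
      have rhs : star u ⬝ᵥ ((A22 - A21 * A11⁻¹ * A12) *ᵥ u) = qR + Complex.I * qS := by
        rw [hRS, Matrix.add_mulVec, Matrix.smul_mulVec, dotProduct_add,
          dotProduct_smul, smul_eq_mul]
      rw [← lhs, hkeyA, rhs]
    have sQB : star QB = QB := conj_quad hB.1 w
    have sQC : star QC = QC := conj_quad hC.1 w
    have sqR : star qR = qR := conj_quad hR u
    have sqS : star qS = qS := conj_quad hS u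
    have h2 : QB - Complex.I * QC = qR - Complex.I * qS := by
      have := congrArg star h1
      simpa [star_add, star_mul', Complex.star_def, Complex.conj_I, sQB, sQC, sqR, sqS,
        sub_eq_add_neg, neg_mul, mul_comm] using this
    have hQBqR : QB = qR := by linear_combination (h1 + h2) / 2
    have hQCqS : QC = qS := by
      have h3 : Complex.I * (QC - qS) = 0 := by linear_combination (h1 - h2) / 2
      exact sub_eq_zero.mp ((mul_eq_zero.mp h3).resolve_left Complex.I_ne_zero)
    constructor
    · -- B part
      have hsc := Matrix.schur_complement_eq₁₁ (A := B11) B12 B22 x u hBd.1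
      have hQB' : QB = star (x + (B11⁻¹ * B12) *ᵥ u) ⬝ᵥ (B11 *ᵥ (x + (B11⁻¹ * B12) *ᵥ u))
          + star u ⬝ᵥ ((B22 - B12ᴴ * B11⁻¹ * B12) *ᵥ u) := by
        rw [hQB, hwdef, hB21, dotProduct_mulVec, hsc, ← dotProduct_mulVec, ← dotProduct_mulVec]
      have hpos : 0 ≤ star (x + (B11⁻¹ * B12) *ᵥ u) ⬝ᵥ (B11 *ᵥ (x + (B11⁻¹ * B12) *ᵥ u)) :=
        hB11.posSemidef.dotProduct_mulVec_nonneg _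
      rw [hB21, ← hQBqR, hQB']
      exact le_add_of_nonneg_left hpos
    · -- C part
      have hsc := Matrix.schur_complement_eq₁₁ (A := C11) C12 C22 x u hCd.1
      have hQC' : QC = star (x + (C11⁻¹ * C12) *ᵥ u) ⬝ᵥ (C11 *ᵥ (x + (C11⁻¹ * C12) *ᵥ u))
          + star u ⬝ᵥ ((C22 - C12ᴴ * C11⁻¹ * C12) *ᵥ u) := by
        rw [hQC, hwdef, hC21, dotProduct_mulVec, hsc, ← dotProduct_mulVec, ← dotProduct_mulVec]
      have hpos : 0 ≤ star (x + (C11⁻¹ * C12) *ᵥ u) ⬝ᵥ (C11 *ᵥ (x + (C11⁻¹ * C12) *ᵥ u)) :=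
        hC11.posSemidef.dotProduct_mulVec_nonneg _
      rw [hC21, ← hQCqS, hQC']
      exact le_add_of_nonneg_left hpos
  refine ⟨.of_dotProduct_mulVec_nonneg (hR.sub hSchurB) fun u => ?_, .of_dotProduct_mulVec_nonneg (hS.sub hSchurC) fun u => ?_⟩
  · rw [Matrix.sub_mulVec, dotProduct_sub, sub_nonneg]
    exact (key u).1
  · rw [Matrix.sub_mulVec, dotProduct_sub, sub_nonneg]
    exact (key u).2
end

section
/- Let A = B + iC be a generalized Higham matrix with A₁₁ an invertible leading principal block in a 2×2 block partition. Then A₁₁ is invertible and the Schur complement A/A₁₁ is again a generalized Higham matrix (its Hermitian and skew-Hermitian-imaginary parts are both positive definite). -/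
open Matrix Complex
open scoped ComplexOrder

private lemma herm_dot {n : Type*} [Fintype n] (A : Matrix n n ℂ) (x : n → ℂ) :
    star x ⬝ᵥ (Aᴴ *ᵥ x) = star (star x ⬝ᵥ (A *ᵥ x)) := by
  rw [star_dotProduct, star_mulVec, conjTranspose_conjTranspose, dotProduct_mulVec]

/-- For a generalized Higham matrix `A = B + iC` (with `B`, `C` Hermitian
positive definite), partitioned into 2×2 blocks, the leading block `A₁₁` is
invertible and the Schur complement `A₂₂ - A₂₁ A₁₁⁻¹ A₁₂` is again a
generalized Higham matrix. -/
theorem schur_complement_generalized_higham {p q : Type*}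
    [Fintype p] [DecidableEq p] [Fintype q] [DecidableEq q]
    (A11 : Matrix p p ℂ) (A12 : Matrix p q ℂ) (A21 : Matrix q p ℂ) (A22 : Matrix q q ℂ)
    (B C : Matrix (p ⊕ q) (p ⊕ q) ℂ)
    (hB : B.PosDef) (hC : C.PosDef)
    (hA : Matrix.fromBlocks A11 A12 A21 A22 = B + Complex.I • C) :
    IsUnit A11 ∧
      ∃ R S : Matrix q q ℂ, R.PosDef ∧ S.PosDef ∧
        A22 - A21 * A11⁻¹ * A12 = R + Complex.I • S := by
  set A : Matrix (p ⊕ q) (p ⊕ q) ℂ := Matrix.fromBlocks A11 A12 A21 A22 with hAdef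
  -- the quadratic form of A has positive real and imaginary parts
  have quad : ∀ y : (p ⊕ q) → ℂ, y ≠ 0 →
      0 < (star y ⬝ᵥ (A *ᵥ y)).re ∧ 0 < (star y ⬝ᵥ (A *ᵥ y)).im := by
    intro y hy
    have hb := hB.dotProduct_mulVec_pos hy
    have hc := hC.dotProduct_mulVec_pos hy
    rw [Complex.lt_def] at hb hc
    have : star y ⬝ᵥ (A *ᵥ y)
        = (star y ⬝ᵥ (B *ᵥ y)) + Complex.I * (star y ⬝ᵥ (C *ᵥ y)) := by
      rw [hA, add_mulVec, smul_mulVec, dotProduct_add, dotProduct_smul, smul_eq_mul]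
    rw [this]
    constructor
    · simp only [Complex.add_re, Complex.mul_re, Complex.I_re, Complex.I_im]
      simp only [Complex.zero_re, Complex.zero_im] at hb hc
      nlinarith [hb.1, hb.2, hc.2]
    · simp only [Complex.add_im, Complex.mul_im, Complex.I_re, Complex.I_im]
      simp only [Complex.zero_re, Complex.zero_im] at hb hc
      nlinarith [hb.2, hc.1, hc.2]
  -- invertibility of A11
  have hunit : IsUnit A11 := by
    rw [Matrix.isUnit_iff_isUnit_det, isUnit_iff_ne_zero]
    intro hdet
    obtain ⟨v, hv, hv0⟩ := (Matrix.exists_mulVec_eq_zero_iff).2 hdet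
    set y : (p ⊕ q) → ℂ := Sum.elim v 0 with hy
    have hyne : y ≠ 0 := by
      intro h
      apply hv
      ext i
      simpa [hy] using congrFun h (Sum.inl i)
    have hAy : A *ᵥ y = Sum.elim (A11 *ᵥ v) (A21 *ᵥ v) := by
      rw [hAdef, hy, Matrix.fromBlocks_mulVec]
      simp
    have hdp : star y ⬝ᵥ (A *ᵥ y) = star v ⬝ᵥ (A11 *ᵥ v) := by
      rw [hAy, hy]
      have hsy : star (Sum.elim v (0 : q → ℂ)) = Sum.elim (star v) 0 := by
        ext (i | i) <;> simp
      rw [hsy, sumElim_dotProduct_sumElim]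
      simp
    have hq := (quad y hyne).1
    rw [hdp, hv0] at hq
    simp at hq
  refine ⟨hunit, ?_⟩
  set S : Matrix q q ℂ := A22 - A21 * A11⁻¹ * A12 with hS
  -- key: the quadratic form of S has positive real and imaginary parts
  have key : ∀ x : q → ℂ, x ≠ 0 →
      0 < (star x ⬝ᵥ (S *ᵥ x)).re ∧ 0 < (star x ⬝ᵥ (S *ᵥ x)).im := by
    intro x hx
    set u : p → ℂ := -(A11⁻¹ *ᵥ (A12 *ᵥ x)) with hu
    set y : (p ⊕ q) → ℂ := Sum.elim u x with hy
    have hyne : y ≠ 0 := by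
      intro h
      apply hx
      ext i
      simpa [hy] using congrFun h (Sum.inr i)
    have hinv : A11 * A11⁻¹ = 1 :=
      Matrix.mul_nonsing_inv A11 ((Matrix.isUnit_iff_isUnit_det A11).1 hunit)
    have hAy : A *ᵥ y = Sum.elim (0 : p → ℂ) (S *ᵥ x) := by
      rw [hAdef, hy, Matrix.fromBlocks_mulVec, Sum.elim_comp_inl, Sum.elim_comp_inr, hu, hS]
      have e1 : A11 *ᵥ -(A11⁻¹ *ᵥ (A12 *ᵥ x)) + A12 *ᵥ x = 0 := by
        rw [Matrix.mulVec_neg, Matrix.mulVec_mulVec, hinv]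
        simp
      have e2 : A21 *ᵥ -(A11⁻¹ *ᵥ (A12 *ᵥ x)) + A22 *ᵥ x
          = (A22 - A21 * A11⁻¹ * A12) *ᵥ x := by
        rw [Matrix.mulVec_neg, Matrix.mulVec_mulVec, Matrix.mulVec_mulVec,
          Matrix.sub_mulVec, Matrix.mul_assoc]
        abel
      rw [e1, e2]
    have hdp : star y ⬝ᵥ (A *ᵥ y) = star x ⬝ᵥ (S *ᵥ x) := by
      rw [hAy, hy]
      have hsy : star (Sum.elim u x) = Sum.elim (star u) (star x) := by
        ext (i | i) <;> simp
      rw [hsy, sumElim_dotProduct_sumElim]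
      simp
    have hq := quad y hyne
    rw [hdp] at hq
    exact hq
  refine ⟨(2 : ℂ)⁻¹ • (S + Sᴴ), (-(Complex.I / 2)) • (S - Sᴴ), ?_, ?_, ?_⟩
  · rw [Matrix.posDef_iff_dotProduct_mulVec]
    constructor
    · unfold Matrix.IsHermitian
      ext i j
      simp only [Matrix.conjTranspose_apply, Matrix.smul_apply, Matrix.add_apply,
        smul_eq_mul, star_mul', star_add, star_star]
      have h2 : star ((2 : ℂ)⁻¹) = (2 : ℂ)⁻¹ := by
        simp [Complex.ext_iff]
      rw [h2]
      ring
    · intro x hx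
      obtain ⟨h1, _⟩ := key x hx
      set z := star x ⬝ᵥ (S *ᵥ x) with hz
      have e1 : star x ⬝ᵥ (((2 : ℂ)⁻¹ • (S + Sᴴ)) *ᵥ x) = (2 : ℂ)⁻¹ * (z + star z) := by
        rw [smul_mulVec, dotProduct_smul, add_mulVec, dotProduct_add, herm_dot,
          smul_eq_mul]
      have e2 : (2 : ℂ)⁻¹ * (z + star z) = (z.re : ℂ) := by
        rw [show star z = (starRingEnd ℂ) z from rfl, Complex.add_conj]
        push_cast
        ring
      rw [e1, e2]
      exact_mod_cast Complex.zero_lt_real.mpr h1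
  · rw [Matrix.posDef_iff_dotProduct_mulVec]
    constructor
    · unfold Matrix.IsHermitian
      ext i j
      simp only [Matrix.conjTranspose_apply, Matrix.smul_apply, Matrix.sub_apply,
        smul_eq_mul, star_mul', star_sub, star_star, star_neg, star_div₀]
      have hI : star (Complex.I) = -Complex.I := Complex.conj_I
      have h2 : star ((2 : ℂ)) = (2 : ℂ) := by simp [Complex.ext_iff]
      rw [hI, h2]
      ring
    · intro x hx
      obtain ⟨_, h2⟩ := key x hx
      set z := star x ⬝ᵥ (S *ᵥ x) with hz
      have e1 : star x ⬝ᵥ (((-(Complex.I / 2)) • (S - Sᴴ)) *ᵥ x)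
          = (-(Complex.I / 2)) * (z - star z) := by
        rw [smul_mulVec, dotProduct_smul, sub_mulVec, dotProduct_sub, herm_dot,
          smul_eq_mul]
      have e2 : (-(Complex.I / 2)) * (z - star z) = (z.im : ℂ) := by
        rw [show star z = (starRingEnd ℂ) z from rfl, Complex.sub_conj]
        push_cast
        linear_combination (-(z.im : ℂ)) * Complex.I_sq
      rw [e1, e2]
      exact_mod_cast Complex.zero_lt_real.mpr h2
  · rw [hS, smul_smul]
    have h1 : Complex.I * (-(Complex.I / 2)) = (2 : ℂ)⁻¹ := by
      linear_combination (-(1 : ℂ)/2) * Complex.I_sq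
    rw [h1, ← smul_add]
    have h2 : (S + Sᴴ) + (S - Sᴴ) = (2 : ℂ) • S := by
      rw [two_smul]; abel
    rw [h2, smul_smul]
    norm_num
    exact hS.symm
end

section
/- Let B = [[B_k, b],[b*, b_jj]] be a (k+1)×(k+1) Hermitian positive definite matrix with condition number κ(B). Then b* B_k⁻¹ b ≤ ((1 − κ(B))/(1 + κ(B)))² · b_jj, and consequently the Schur complement scalar satisfies b_jj − b* B_k⁻¹ b ≥ (4κ(B)/(1 + κ(B))²) · b_jj. -/
open Matrix Complex
open scoped ComplexOrder

section Aux

lemma real_key_aux (m M Y s P : ℝ) (hm : 0 < m) (hmY : m ≤ Y) (hYM : Y ≤ M)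
    (hs : 0 ≤ s) (hP : 0 ≤ P)
    (hq1 : ∀ α β : ℝ, 0 ≤ α^2*s + 2*α*β*s + β^2*Y - m*(α^2*P + β^2))
    (hq2 : ∀ α β : ℝ, 0 ≤ M*(α^2*P + β^2) - (α^2*s + 2*α*β*s + β^2*Y)) :
    (M + m)^2 * s ≤ (M - m)^2 * Y := by
  rcases hs.eq_or_lt with hs0 | hs0
  · nlinarith [sq_nonneg (M - m)]
  · have hmM : m < M := by
      rcases lt_or_ge m M with h | h
      · exact h
      · exfalso
        have hYm : Y = m := le_antisymm (hYM.trans h) hmY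
        set β : ℝ := -(s - m*P + 1)/(2*s) with hβdef
        have hsne : s ≠ 0 := ne_of_gt hs0
        have hβ : 2*β*s = -(s - m*P + 1) := by
          rw [hβdef]; field_simp
        have h1 := hq1 1 β
        rw [hYm] at h1
        nlinarith [h1, hβ]
    have hA : 0 ≤ (s - m*P)*(Y - m) - s^2 := by
      have := discrim_le_zero (a := s - m*P) (b := 2*s) (c := Y - m)
        (fun x => by nlinarith [hq1 x 1])
      rw [discrim] at this; nlinarith
    have hB : 0 ≤ (M*P - s)*(M - Y) - s^2 := by
      have := discrim_le_zero (a := M*P - s) (b := -(2*s)) (c := M - Y)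
        (fun x => by nlinarith [hq2 x 1])
      rw [discrim] at this; nlinarith
    have hc : 0 < s * (M - m) * (M + m - Y) :=
      mul_pos (mul_pos hs0 (by linarith)) (by linarith)
    have hTc : 0 ≤ ((M - m)^2 * Y - (M + m)^2 * s) * (s * (M - m) * (M + m - Y)) := by
      have hid : ((M - m)^2 * Y - (M + m)^2 * s) * (s * (M - m) * (M + m - Y))
          = (M+m)^2 * (M*(M-Y)*((s - m*P)*(Y - m) - s^2)
              + m*(Y-m)*((M*P - s)*(M - Y) - s^2))
            + s*(M-m)*m*M*(2*Y-M-m)^2 := by ring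
      rw [hid]
      have h1 : 0 ≤ M*(M-Y) := mul_nonneg (by linarith) (by linarith)
      have h2 : 0 ≤ m*(Y-m) := mul_nonneg hm.le (by linarith)
      have h3 : 0 ≤ s*(M-m)*m*M :=
        mul_nonneg (mul_nonneg (mul_nonneg hs (by linarith)) hm.le) (by linarith)
      nlinarith [mul_nonneg h1 hA, mul_nonneg h2 hB, mul_nonneg h3 (sq_nonneg (2*Y-M-m)),
        sq_nonneg (M+m)]
    nlinarith [mul_nonneg_iff_of_pos_right hc |>.mp hTc]

lemma rayleigh_aux {n : Type*} [Fintype n] [DecidableEq n] [Nonempty n]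
    {A : Matrix n n ℂ} (hA : A.IsHermitian) (z : n → ℂ) :
    (⨅ i, hA.eigenvalues i) * (star z ⬝ᵥ z).re ≤ (star z ⬝ᵥ A.mulVec z).re ∧
      (star z ⬝ᵥ A.mulVec z).re ≤ (⨆ i, hA.eigenvalues i) * (star z ⬝ᵥ z).re := by
  set U : Matrix n n ℂ := (hA.eigenvectorUnitary : Matrix n n ℂ) with hU
  have hUU : U * star U = 1 := (Matrix.mem_unitaryGroup_iff).mp hA.eigenvectorUnitary.2
  set w : n → ℂ := (star U) *ᵥ z with hw
  have hsw : star z ᵥ* U = star w := by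
    rw [hw, Matrix.star_mulVec, Matrix.star_eq_conjTranspose, conjTranspose_conjTranspose]
  have h1 : star z ⬝ᵥ A.mulVec z = ∑ i, (hA.eigenvalues i : ℂ) * (star (w i) * w i) := by
    conv_lhs => rw [hA.spectral_theorem, Unitary.conjStarAlgAut_apply, ← hU]
    rw [← Matrix.mulVec_mulVec, ← Matrix.mulVec_mulVec, Matrix.dotProduct_mulVec, hsw,
      Matrix.dotProduct_mulVec]
    simp only [Matrix.vecMul_diagonal, dotProduct, Pi.star_apply, Function.comp]
    exact Finset.sum_congr rfl fun i _ => by rw [← hw, mul_right_comm]; exact mul_comm _ _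
  have h2 : star z ⬝ᵥ z = ∑ i, star (w i) * w i := by
    have hz : U *ᵥ w = z := by
      rw [hw, Matrix.mulVec_mulVec, hUU, Matrix.one_mulVec]
    calc star z ⬝ᵥ z = star (U *ᵥ w) ⬝ᵥ z := by rw [hz]
      _ = (star w ᵥ* Uᴴ) ⬝ᵥ z := by rw [Matrix.star_mulVec]
      _ = star w ⬝ᵥ (Uᴴ *ᵥ z) := by rw [Matrix.dotProduct_mulVec]
      _ = star w ⬝ᵥ w := by rw [hw, Matrix.star_eq_conjTranspose]
      _ = ∑ i, star (w i) * w i := rfl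
  have hns : ∀ i, star (w i) * w i = ((Complex.normSq (w i) : ℝ) : ℂ) := fun i => by
    rw [Complex.star_def, ← Complex.normSq_eq_conj_mul_self]
  have h1re : (star z ⬝ᵥ A.mulVec z).re = ∑ i, hA.eigenvalues i * Complex.normSq (w i) := by
    rw [h1, Complex.re_sum]
    exact Finset.sum_congr rfl fun i _ => by rw [hns i, ← Complex.ofReal_mul, Complex.ofReal_re]
  have h2re : (star z ⬝ᵥ z).re = ∑ i, Complex.normSq (w i) := by
    rw [h2, Complex.re_sum]
    exact Finset.sum_congr rfl fun i _ => by rw [hns i, Complex.ofReal_re]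
  have hbdd : BddBelow (Set.range hA.eigenvalues) := (Set.finite_range _).bddBelow
  have hbdd' : BddAbove (Set.range hA.eigenvalues) := (Set.finite_range _).bddAbove
  rw [h1re, h2re]
  constructor
  · rw [Finset.mul_sum]
    exact Finset.sum_le_sum fun i _ =>
      mul_le_mul_of_nonneg_right (ciInf_le hbdd i) (Complex.normSq_nonneg _)
  · rw [Finset.mul_sum]
    exact Finset.sum_le_sum fun i _ =>
      mul_le_mul_of_nonneg_right (le_ciSup hbdd' i) (Complex.normSq_nonneg _)

lemma quad_snoc_aux {k : ℕ} (B : Matrix (Fin (k+1)) (Fin (k+1)) ℂ) (x : Fin k → ℂ) (c : ℂ) :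
    star (Fin.snoc x c : Fin (k+1) → ℂ) ⬝ᵥ B *ᵥ (Fin.snoc x c) =
      star x ⬝ᵥ (B.submatrix Fin.castSucc Fin.castSucc) *ᵥ x
      + (star x ⬝ᵥ fun i => B i.castSucc (Fin.last k)) * c
      + star c * ((fun j => B (Fin.last k) j.castSucc) ⬝ᵥ x)
      + star c * B (Fin.last k) (Fin.last k) * c := by
  simp only [dotProduct, Matrix.mulVec, Fin.sum_univ_castSucc, Fin.snoc_castSucc,
    Fin.snoc_last, Pi.star_apply, Matrix.submatrix_apply, mul_add, add_mul,
    Finset.sum_add_distrib, Finset.mul_sum, Finset.sum_mul]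
  ring_nf
  congr 1
  exact Finset.sum_congr rfl fun _ _ => by ring

end Aux

/-- For a `(k+1) × (k+1)` Hermitian positive definite matrix
`B = [[B_k, b], [b*, b_jj]]` with condition number `κ(B)`, one has
`b* B_k⁻¹ b ≤ ((1-κ(B))/(1+κ(B)))² b_jj` and hence
`b_jj - b* B_k⁻¹ b ≥ (4κ(B)/(1+κ(B))²) b_jj`. -/
theorem corner_schur_scalar_bounds {k : ℕ}
    (B : Matrix (Fin (k + 1)) (Fin (k + 1)) ℂ) (hB : B.PosDef)
    (Bk : Matrix (Fin k) (Fin k) ℂ) (b : Fin k → ℂ) (bjj : ℂ)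
    (hBk : Bk = B.submatrix Fin.castSucc Fin.castSucc)
    (hb : b = fun i => B i.castSucc (Fin.last k))
    (hbjj : bjj = B (Fin.last k) (Fin.last k)) :
    (star b ⬝ᵥ Bk⁻¹.mulVec b).re ≤
        ((1 - condNum hB.isHermitian) / (1 + condNum hB.isHermitian)) ^ 2 * bjj.re ∧
      4 * condNum hB.isHermitian / (1 + condNum hB.isHermitian) ^ 2 * bjj.re ≤
        (bjj - star b ⬝ᵥ Bk⁻¹.mulVec b).re := by
  classical
  set m := ⨅ i, hB.isHermitian.eigenvalues i with hmdef
  set M := ⨆ i, hB.isHermitian.eigenvalues i with hMdef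
  have hκ : condNum hB.isHermitian = M / m := rfl
  have hm : 0 < m := by
    obtain ⟨i, hi⟩ := exists_eq_ciInf_of_finite (f := hB.isHermitian.eigenvalues)
    rw [hmdef, ← hi]; exact hB.eigenvalues_pos i
  -- Bk is positive definite
  have hBkH : Bk.IsHermitian := by rw [hBk]; exact hB.isHermitian.submatrix _
  have hBkpd : Bk.PosDef := by
    refine posDef_iff_dotProduct_mulVec.mpr ⟨hBkH, fun x hx => ?_⟩
    have hz : (Fin.snoc x (0:ℂ) : Fin (k+1) → ℂ) ≠ 0 := by
      intro h; apply hx; funext i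
      have := congrFun h i.castSucc
      simpa using this
    have hpos := hB.dotProduct_mulVec_pos hz
    rw [quad_snoc_aux] at hpos
    simp only [star_zero, zero_mul, mul_zero, add_zero] at hpos
    rwa [hBk]
  set u := Bk⁻¹.mulVec b with hu
  set s := star b ⬝ᵥ u with hs
  have hBku : Bk *ᵥ u = b := by
    rw [hu, Matrix.mulVec_mulVec,
      Matrix.mul_nonsing_inv _ ((Matrix.isUnit_iff_isUnit_det _).mp hBkpd.isUnit),
      Matrix.one_mulVec]
  have hsconj : star u ⬝ᵥ b = star s := by
    rw [hs, Matrix.star_dotProduct]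
  have hsre : 0 ≤ s.re := by
    have := hBkpd.inv.posSemidef.re_dotProduct_nonneg b
    simpa [hs, hu] using this
  set P := (star u ⬝ᵥ u).re with hP
  have hstar_mul_self : ∀ zc : ℂ, (star zc * zc).re = Complex.normSq zc := fun zc => by
    rw [Complex.star_def, ← Complex.normSq_eq_conj_mul_self, Complex.ofReal_re]
  have hPnn : 0 ≤ P := by
    rw [hP]
    simp only [dotProduct, Pi.star_apply, Complex.re_sum]
    exact Finset.sum_nonneg fun i _ => by rw [hstar_mul_self]; exact Complex.normSq_nonneg _
  have hrow : (fun j : Fin k => B (Fin.last k) j.castSucc) = star b := by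
    funext j
    simp only [Pi.star_apply, hb]
    exact (hB.isHermitian.apply _ _).symm
  -- the quadratic-form evaluations
  have e1 : ∀ α β : ℝ,
      (star (Fin.snoc ((α:ℂ) • u) (β:ℂ) : Fin (k+1) → ℂ) ⬝ᵥ
        B *ᵥ (Fin.snoc ((α:ℂ) • u) (β:ℂ))).re
      = α^2 * s.re + 2*(α*β)*s.re + β^2*bjj.re := by
    intro α β
    rw [quad_snoc_aux, ← hBk, hrow, ← hb, ← hbjj]
    simp only [star_smul, Matrix.mulVec_smul, smul_dotProduct, dotProduct_smul,
      hBku, hsconj, ← hs, smul_eq_mul, Complex.star_def, Complex.conj_ofReal]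
    simp only [Complex.add_re, Complex.mul_re, Complex.ofReal_re, Complex.ofReal_im,
      Complex.conj_re, Complex.conj_im]
    ring
  have e2 : ∀ α β : ℝ,
      (star (Fin.snoc ((α:ℂ) • u) (β:ℂ) : Fin (k+1) → ℂ) ⬝ᵥ
        (Fin.snoc ((α:ℂ) • u) (β:ℂ) : Fin (k+1) → ℂ)).re
      = α^2*P + β^2 := by
    intro α β
    have : (star (Fin.snoc ((α:ℂ) • u) (β:ℂ) : Fin (k+1) → ℂ) ⬝ᵥ
        (Fin.snoc ((α:ℂ) • u) (β:ℂ) : Fin (k+1) → ℂ))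
        = ((α:ℂ) * Complex.ofReal α) * (star u ⬝ᵥ u) + (β:ℂ) * β := by
      simp only [dotProduct, Fin.sum_univ_castSucc, Fin.snoc_castSucc, Fin.snoc_last,
        Pi.star_apply, Pi.smul_apply, star_smul, smul_eq_mul, Complex.star_def,
        _root_.map_mul, Complex.conj_ofReal, Finset.mul_sum]
      ring_nf
    rw [this]
    simp only [Complex.add_re, Complex.mul_re, Complex.mul_im, Complex.ofReal_re,
      Complex.ofReal_im, hP]
    ring
  -- bounds for bjj.re
  have e0 : (star (Fin.snoc (0 : Fin k → ℂ) (1:ℂ) : Fin (k+1) → ℂ) ⬝ᵥ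
      B *ᵥ (Fin.snoc (0 : Fin k → ℂ) (1:ℂ))) = bjj := by
    rw [quad_snoc_aux, ← hbjj]
    simp
  have e0' : (star (Fin.snoc (0 : Fin k → ℂ) (1:ℂ) : Fin (k+1) → ℂ) ⬝ᵥ
      (Fin.snoc (0 : Fin k → ℂ) (1:ℂ) : Fin (k+1) → ℂ)) = 1 := by
    simp [dotProduct, Fin.sum_univ_castSucc]
  have hY := rayleigh_aux hB.isHermitian (Fin.snoc (0 : Fin k → ℂ) (1:ℂ))
  rw [e0, e0'] at hY
  simp only [Complex.one_re, mul_one] at hY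
  have hmY : m ≤ bjj.re := hY.1
  have hYM : bjj.re ≤ M := hY.2
  -- the quadratic inequalities
  have hq1 : ∀ α β : ℝ, 0 ≤ α^2*s.re + 2*α*β*s.re + β^2*bjj.re - m*(α^2*P + β^2) := by
    intro α β
    have := (rayleigh_aux hB.isHermitian (Fin.snoc ((α:ℂ) • u) (β:ℂ))).1
    rw [e1 α β, e2 α β] at this
    linarith
  have hq2 : ∀ α β : ℝ, 0 ≤ M*(α^2*P + β^2) - (α^2*s.re + 2*α*β*s.re + β^2*bjj.re) := by
    intro α β
    have := (rayleigh_aux hB.isHermitian (Fin.snoc ((α:ℂ) • u) (β:ℂ))).2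
    rw [e1 α β, e2 α β] at this
    linarith
  have hkey := real_key_aux m M bjj.re s.re P hm hmY hYM hsre hPnn hq1 hq2
  have hMm : m ≤ M := hmY.trans hYM
  have hM0 : 0 < M := lt_of_lt_of_le hm hMm
  have hsum : 0 < M + m := by linarith
  have hsumsq : 0 < (M + m)^2 := by positivity
  have h1p : 0 < 1 + M/m := by
    have := div_pos hM0 hm
    linarith
  have h1psq : (1 + M/m)^2 ≠ 0 := by positivity
  constructor
  · have h1 : ((1 - M/m)/(1 + M/m))^2 = (M-m)^2/(M+m)^2 := by
      rw [div_pow, div_eq_div_iff h1psq (ne_of_gt hsumsq)]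
      field_simp [hm.ne']
      ring
    rw [hκ, h1, div_mul_eq_mul_div, le_div_iff₀ hsumsq]
    nlinarith [hkey]
  · have h2 : 4*(M/m)/(1+M/m)^2 = 4*M*m/(M+m)^2 := by
      field_simp
      ring
    rw [hκ, Complex.sub_re, h2, div_mul_eq_mul_div, div_le_iff₀ hsumsq]
    nlinarith [hkey]
end

section
/- Let A = B + iC be a generalized Higham matrix with Gaussian elimination performed without pivoting, and let a_{jj}^{(k)} = a_{jj} − βᵀ A_k⁻¹ α denote the (j,j) entry after k steps of elimination (where A_k is the leading k×k principal submatrix, α and β the relevant column/row segments). Then |a_{jj}^{(k)}| ≥ (4κ/(1+κ)²)|a_{jj}|, where κ = max{κ(B), κ(C)} and κ denotes the spectral condition number. -/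
open Matrix Complex
open scoped ComplexOrder

set_option linter.unusedSectionVars false
set_option linter.unusedVariables false
set_option maxHeartbeats 1600000

namespace EDLB

variable {m : Type*} [Fintype m] [DecidableEq m]
variable {n' : Type*} [Fintype n'] [DecidableEq n']

/-- Hermitian quadratic forms are real. -/
lemma herm_form_real {M : Matrix m m ℂ} (hM : M.IsHermitian) (x : m → ℂ) :
    star x ⬝ᵥ M *ᵥ x = (((star x ⬝ᵥ M *ᵥ x).re : ℝ) : ℂ) := by
  have h : (starRingEnd ℂ) (star x ⬝ᵥ M *ᵥ x) = star x ⬝ᵥ M *ᵥ x := by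
    have h1 : star (M *ᵥ x) ⬝ᵥ star (star x) = star (star x ⬝ᵥ M *ᵥ x) :=
      star_dotProduct_star _ _
    rw [star_star, star_mulVec, hM.eq, ← dotProduct_mulVec] at h1
    simpa using h1.symm
  exact (Complex.conj_eq_iff_re.mp h).symm


lemma form_add (M N : Matrix m m ℂ) (x : m → ℂ) :
    star x ⬝ᵥ (M + N) *ᵥ x = star x ⬝ᵥ M *ᵥ x + star x ⬝ᵥ N *ᵥ x := by
  rw [add_mulVec, dotProduct_add]


lemma form_smul (c : ℂ) (M : Matrix m m ℂ) (x : m → ℂ) :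
    star x ⬝ᵥ (c • M) *ᵥ x = c * (star x ⬝ᵥ M *ᵥ x) := by
  rw [smul_mulVec, dotProduct_smul, smul_eq_mul]


/-- A generalized Higham matrix has unit (nonzero) determinant. -/
lemma higham_isUnit_det {H S : Matrix m m ℂ} (hH : H.PosDef) (hS : S.IsHermitian) :
    IsUnit (H + Complex.I • S).det := by
  rw [isUnit_iff_ne_zero]
  intro hdet
  obtain ⟨v, hv, hveq⟩ := (Matrix.exists_mulVec_eq_zero_iff).mpr hdet
  have h0 : star v ⬝ᵥ (H + Complex.I • S) *ᵥ v = 0 := by rw [hveq, dotProduct_zero]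
  rw [form_add, form_smul] at h0
  have hre : (star v ⬝ᵥ H *ᵥ v).re + (Complex.I * (star v ⬝ᵥ S *ᵥ v)).re = 0 := by
    have := congrArg Complex.re h0
    simpa using this
  have hSre : (Complex.I * (star v ⬝ᵥ S *ᵥ v)).re = 0 := by
    rw [herm_form_real hS v]
    simp
  have := hH.re_dotProduct_pos hv
  simp only [RCLike.re_to_complex] at this
  linarith [hre, hSre, this]


/-- conjugate of a sesquilinear matrix form -/
lemma form_conj (M : Matrix m m ℂ) (a c : m → ℂ) :
    star (star a ⬝ᵥ M *ᵥ c) = star c ⬝ᵥ Mᴴ *ᵥ a := by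
  have h1 : star (M *ᵥ c) ⬝ᵥ star (star a) = star (star a ⬝ᵥ M *ᵥ c) :=
    star_dotProduct_star _ _
  rw [star_star, star_mulVec, ← dotProduct_mulVec] at h1
  exact h1.symm


/-- the embedding matrix of `e : m → n'` -/
def emb (e : m → n') : Matrix n' m ℂ := Matrix.of fun i p => if i = e p then (1 : ℂ) else 0


lemma emb_mulVec_apply (e : m → n') (he : Function.Injective e) (y : m → ℂ) (p : m) :
    (emb e *ᵥ y) (e p) = y p := by
  simp [emb, Matrix.mulVec, dotProduct, he.eq_iff]


lemma emb_conj (e : m → n') (he : Function.Injective e) (M : Matrix n' n' ℂ) :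
    (emb e)ᴴ * M * (emb e) = M.submatrix e e := by
  ext p q
  simp only [Matrix.mul_apply, conjTranspose_apply, emb, Matrix.of_apply, submatrix_apply]
  simp [apply_ite (star (R := ℂ)), ite_mul, mul_ite, Finset.sum_ite_eq', Finset.sum_ite_eq]


lemma emb_form (e : m → n') (he : Function.Injective e) (M : Matrix n' n' ℂ) (y : m → ℂ) :
    star (emb e *ᵥ y) ⬝ᵥ M *ᵥ (emb e *ᵥ y) = star y ⬝ᵥ (M.submatrix e e) *ᵥ y := by
  rw [mulVec_mulVec, star_mulVec, ← dotProduct_mulVec, mulVec_mulVec, ← Matrix.mul_assoc,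
    emb_conj e he]


lemma posDef_submatrix {M : Matrix n' n' ℂ} (hM : M.PosDef) {e : m → n'}
    (he : Function.Injective e) : (M.submatrix e e).PosDef := by
  refine .of_dotProduct_mulVec_pos (hM.isHermitian.submatrix e) fun y hy => ?_
  rw [← emb_form e he]
  refine hM.dotProduct_mulVec_pos fun h0 => ?_
  obtain ⟨p, hp⟩ := Function.ne_iff.mp hy
  exact hp (by rw [← emb_mulVec_apply e he y p, h0]; rfl)


/-- Cauchy–Schwarz for a PSD sesquilinear form. -/
lemma cs_psd {M : Matrix m m ℂ} (hM : M.PosSemidef) (a b : m → ℂ) :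
    ‖star a ⬝ᵥ M *ᵥ b‖ ^ 2 ≤ (star a ⬝ᵥ M *ᵥ a).re * (star b ⬝ᵥ M *ᵥ b).re := by
  obtain ⟨R, hRsa, -, hRR⟩ : ∃ R : Matrix m m ℂ, IsSelfAdjoint R ∧
      QuasispectrumRestricts R ContinuousMap.realToNNReal ∧ R * R = M := by
    open scoped MatrixOrder in
    exact CFC.exists_sqrt_of_isSelfAdjoint_of_quasispectrumRestricts hM.isHermitian
      (QuasispectrumRestricts.nnreal_of_nonneg hM.nonneg)
  have hRH : Rᴴ = R := hRsa
  have key : ∀ u v : m → ℂ,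
      star u ⬝ᵥ M *ᵥ v = star (R *ᵥ u) ⬝ᵥ (R *ᵥ v) := by
    intro u v
    rw [star_mulVec, hRH, ← dotProduct_mulVec, mulVec_mulVec, hRR]
  set a' : EuclideanSpace ℂ m := WithLp.toLp 2 (R *ᵥ a)
  set b' : EuclideanSpace ℂ m := WithLp.toLp 2 (R *ᵥ b)
  have hi : (inner ℂ a' b' : ℂ) = star a ⬝ᵥ M *ᵥ b := by
    rw [key, dotProduct_comm]; rfl
  have hia : (inner ℂ a' a' : ℂ) = star a ⬝ᵥ M *ᵥ a := by
    rw [key, dotProduct_comm]; rfl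
  have hib : (inner ℂ b' b' : ℂ) = star b ⬝ᵥ M *ᵥ b := by
    rw [key, dotProduct_comm]; rfl
  have hcs : ‖(inner ℂ a' b' : ℂ)‖ ≤ ‖a'‖ * ‖b'‖ := norm_inner_le_norm (𝕜 := ℂ) a' b'
  have hna : ‖a'‖ ^ 2 = (star a ⬝ᵥ M *ᵥ a).re := by
    have h := inner_self_eq_norm_sq (𝕜 := ℂ) a'
    rw [hia] at h
    simpa [RCLike.re_to_complex] using h.symm
  have hnb : ‖b'‖ ^ 2 = (star b ⬝ᵥ M *ᵥ b).re := by
    have h := inner_self_eq_norm_sq (𝕜 := ℂ) b'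
    rw [hib] at h
    simpa [RCLike.re_to_complex] using h.symm
  calc ‖star a ⬝ᵥ M *ᵥ b‖ ^ 2 = ‖(inner ℂ a' b' : ℂ)‖ ^ 2 := by
        rw [hi]
    _ ≤ (‖a'‖ * ‖b'‖) ^ 2 := by
        have h0 : (0:ℝ) ≤ ‖(inner ℂ a' b' : ℂ)‖ := norm_nonneg _
        nlinarith
    _ = (star a ⬝ᵥ M *ᵥ a).re * (star b ⬝ᵥ M *ᵥ b).re := by
        rw [mul_pow, hna, hnb]


/-- Key lemma: the modulus of a quadratic form of the inverse of `H + iS` is bounded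
by the corresponding quadratic form of `H⁻¹`. -/
lemma abs_inv_form_le {H S : Matrix m m ℂ} (hH : H.PosDef) (hS : S.IsHermitian) (x : m → ℂ) :
    ‖star x ⬝ᵥ (H + Complex.I • S)⁻¹ *ᵥ x‖ ≤ (star x ⬝ᵥ H⁻¹ *ᵥ x).re := by
  set N := H + Complex.I • S with hN
  have hNdet : IsUnit N.det := higham_isUnit_det hH hS
  have hHdet : IsUnit H.det := isUnit_iff_ne_zero.mpr hH.det_pos.ne'
  set z : m → ℂ := N⁻¹ *ᵥ x with hz
  have hxz : N *ᵥ z = x := by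
    rw [hz, mulVec_mulVec, mul_nonsing_inv _ hNdet, one_mulVec]
  set b : m → ℂ := H⁻¹ *ᵥ (S *ᵥ z) with hb
  have hHb : H *ᵥ b = S *ᵥ z := by
    rw [hb, mulVec_mulVec, mulVec_mulVec, mul_nonsing_inv _ hHdet, Matrix.one_mul]
  set h : ℝ := (star z ⬝ᵥ H *ᵥ z).re with hh
  set s : ℝ := (star z ⬝ᵥ S *ᵥ z).re with hs
  set t : ℝ := (star b ⬝ᵥ H *ᵥ b).re with ht
  have hzH : star z ⬝ᵥ H *ᵥ z = ((h : ℝ) : ℂ) := herm_form_real hH.isHermitian z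
  have hzS : star z ⬝ᵥ S *ᵥ z = ((s : ℝ) : ℂ) := herm_form_real hS z
  have hbH : star b ⬝ᵥ H *ᵥ b = ((t : ℝ) : ℂ) := herm_form_real hH.isHermitian b
  -- z-form of x
  have hzx : star z ⬝ᵥ x = (h : ℂ) + Complex.I * s := by
    rw [← hxz, hN, form_add, form_smul, hzH, hzS]
  -- step 1 : star x ⬝ᵥ z
  have hstep1 : star x ⬝ᵥ z = (h : ℂ) - Complex.I * s := by
    have h1 : star x ⬝ᵥ z = star (star z ⬝ᵥ x) := star_dotProduct _ _
    rw [h1, hzx]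
    simp [sub_eq_add_neg]
  -- star z ⬝ᵥ H *ᵥ b = s  (since H b = S z)
  have hzHb : star z ⬝ᵥ H *ᵥ b = ((s : ℝ) : ℂ) := by rw [hHb, hzS]
  -- star b ⬝ᵥ H *ᵥ z = s
  have hbHz : star b ⬝ᵥ H *ᵥ z = ((s : ℝ) : ℂ) := by
    have := form_conj H z b
    rw [hzHb, hH.isHermitian.eq] at this
    simpa using this.symm
  -- star b ⬝ᵥ x = s + I t
  have hbx : star b ⬝ᵥ x = (s : ℂ) + Complex.I * t := by
    rw [← hxz, hN, add_mulVec, dotProduct_add, smul_mulVec, dotProduct_smul,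
      smul_eq_mul, hbHz, ← hHb, hbH]
  -- star x ⬝ᵥ b = s - I t
  have hxb : star x ⬝ᵥ b = (s : ℂ) - Complex.I * t := by
    have h1 : star x ⬝ᵥ b = star (star b ⬝ᵥ x) := star_dotProduct _ _
    rw [h1, hbx]
    simp [sub_eq_add_neg]
  -- H⁻¹ x = z + I • b
  have hHix : H⁻¹ *ᵥ x = z + Complex.I • b := by
    rw [← hxz, hN, add_mulVec, smul_mulVec, mulVec_add, mulVec_smul,
      mulVec_mulVec, nonsing_inv_mul _ hHdet, one_mulVec, hb, mulVec_mulVec]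
  -- step 2
  have hstep2 : star x ⬝ᵥ H⁻¹ *ᵥ x = ((h + t : ℝ) : ℂ) := by
    rw [hHix, dotProduct_add, dotProduct_smul, smul_eq_mul, hstep1, hxb]
    push_cast
    linear_combination (-(t : ℂ)) * Complex.I_sq
  -- nonnegativity
  have hh0 : 0 ≤ h := by
    have := hH.posSemidef.re_dotProduct_nonneg z
    simpa [RCLike.re_to_complex] using this
  have ht0 : 0 ≤ t := by
    have := hH.posSemidef.re_dotProduct_nonneg b
    simpa [RCLike.re_to_complex] using this
  -- Cauchy–Schwarz : s^2 ≤ h * t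
  have hcs : s ^ 2 ≤ h * t := by
    have := cs_psd hH.posSemidef z b
    rw [hzHb, hzH, hbH] at this
    simpa [Complex.norm_real, _root_.sq_abs] using this
  -- finish
  rw [hstep2]
  have hq : star x ⬝ᵥ N⁻¹ *ᵥ x = (h : ℂ) - Complex.I * s := hstep1
  rw [hq]
  have habs : ‖(h : ℂ) - Complex.I * s‖ = Real.sqrt (h ^ 2 + s ^ 2) := by
    have hre : ((h : ℂ) - Complex.I * s).re = h := by simp
    have him : ((h : ℂ) - Complex.I * s).im = -s := by simp
    rw [Complex.norm_def, Complex.normSq_apply, hre, him]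
    ring_nf
  rw [habs]
  simp only [Complex.ofReal_re]
  have : h ^ 2 + s ^ 2 ≤ (h + t) ^ 2 := by nlinarith
  calc Real.sqrt (h ^ 2 + s ^ 2) ≤ Real.sqrt ((h + t) ^ 2) := Real.sqrt_le_sqrt this
    _ = h + t := by rw [Real.sqrt_sq (by linarith)]


lemma spectral_inv {H : Matrix m m ℂ} (hH : H.PosDef) :
    H⁻¹ = (hH.isHermitian.eigenvectorUnitary : Matrix m m ℂ) *
        diagonal (fun i => (((hH.isHermitian.eigenvalues i)⁻¹ : ℝ) : ℂ)) *
        star (hH.isHermitian.eigenvectorUnitary : Matrix m m ℂ) := by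
  set U : Matrix m m ℂ := (hH.isHermitian.eigenvectorUnitary : Matrix m m ℂ) with hU
  have hsU : star U * U = 1 := Unitary.coe_star_mul_self hH.isHermitian.eigenvectorUnitary
  have hUs : U * star U = 1 := Unitary.coe_mul_star_self hH.isHermitian.eigenvectorUnitary
  apply inv_eq_right_inv
  nth_rewrite 1 [hH.isHermitian.spectral_theorem]
  rw [Unitary.conjStarAlgAut_apply]
  simp only [Matrix.mul_assoc]
  rw [← Matrix.mul_assoc (star U) U, hsU, Matrix.one_mul,
    ← Matrix.mul_assoc (diagonal _) (diagonal _), diagonal_mul_diagonal]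
  have hd : (fun i => (RCLike.ofReal ∘ hH.isHermitian.eigenvalues) i *
      (((hH.isHermitian.eigenvalues i)⁻¹ : ℝ) : ℂ)) = fun _ => (1 : ℂ) := by
    funext i
    have hne : hH.isHermitian.eigenvalues i ≠ 0 := (hH.eigenvalues_pos i).ne'
    show ((hH.isHermitian.eigenvalues i : ℝ) : ℂ) *
        (((hH.isHermitian.eigenvalues i)⁻¹ : ℝ) : ℂ) = 1
    rw [← Complex.ofReal_mul, mul_inv_cancel₀ hne, Complex.ofReal_one]
  rw [hd, diagonal_one, Matrix.one_mul, hUs]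


lemma mulmul_linear (U V X Y Z : Matrix m m ℂ) (a b c : ℂ) :
    a • (U * X * V) + b • (U * Y * V) + c • (U * Z * V) =
      U * (a • X + b • Y + c • Z) * V := by
  rw [Matrix.mul_add, Matrix.mul_add, Matrix.add_mul, Matrix.add_mul,
    Matrix.mul_smul, Matrix.mul_smul, Matrix.mul_smul,
    Matrix.smul_mul, Matrix.smul_mul, Matrix.smul_mul]


lemma combo_psd {H : Matrix m m ℂ} (hH : H.PosDef) (a b c : ℝ)
    (hf : ∀ i, 0 ≤ a + b * hH.isHermitian.eigenvalues i +
      c * (hH.isHermitian.eigenvalues i)⁻¹) :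
    PosSemidef ((a : ℂ) • (1 : Matrix m m ℂ) + (b : ℂ) • H + (c : ℂ) • H⁻¹) := by
  set U : Matrix m m ℂ := (hH.isHermitian.eigenvectorUnitary : Matrix m m ℂ) with hU
  have hUs : U * star U = 1 := Unitary.coe_mul_star_self hH.isHermitian.eigenvectorUnitary
  have h1 : (1 : Matrix m m ℂ) = U * diagonal (fun _ => (1 : ℂ)) * star U := by
    rw [diagonal_one, Matrix.mul_one, hUs]
  have key : (a : ℂ) • (1 : Matrix m m ℂ) + (b : ℂ) • H + (c : ℂ) • H⁻¹ =
      U * diagonal (fun i => ((a + b * hH.isHermitian.eigenvalues i +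
        c * (hH.isHermitian.eigenvalues i)⁻¹ : ℝ) : ℂ)) * star U := by
    nth_rewrite 1 [h1]
    nth_rewrite 1 [hH.isHermitian.spectral_theorem]
    nth_rewrite 1 [spectral_inv hH]
    rw [Unitary.conjStarAlgAut_apply]
    rw [mulmul_linear]
    congr 2
    rw [← diagonal_smul, ← diagonal_smul, ← diagonal_smul, diagonal_add, diagonal_add]
    refine congrArg Matrix.diagonal (funext fun i => ?_)
    show (a : ℂ) * 1 + (b : ℂ) * ((hH.isHermitian.eigenvalues i : ℝ) : ℂ) +
        (c : ℂ) * (((hH.isHermitian.eigenvalues i)⁻¹ : ℝ) : ℂ) = _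
    push_cast
    ring
  rw [key]
  have hD : PosSemidef (diagonal (fun i => ((a + b * hH.isHermitian.eigenvalues i +
      c * (hH.isHermitian.eigenvalues i)⁻¹ : ℝ) : ℂ))) := by
    apply PosSemidef.diagonal
    rw [Pi.le_def]
    intro i
    simpa using Complex.zero_le_real.mpr (hf i)
  have := hD.mul_mul_conjTranspose_same U
  simpa [Matrix.star_eq_conjTranspose] using this


lemma vec_unit {M : Matrix m m ℂ} (hM : M.IsHermitian) (i : m) :
    star ⇑(hM.eigenvectorBasis i) ⬝ᵥ ⇑(hM.eigenvectorBasis i) = (1 : ℂ) := by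
  have h1 : (inner ℂ (hM.eigenvectorBasis i) (hM.eigenvectorBasis i) : ℂ) =
      star ⇑(hM.eigenvectorBasis i) ⬝ᵥ ⇑(hM.eigenvectorBasis i) := by
    rw [EuclideanSpace.inner_eq_star_dotProduct, dotProduct_comm]
  have h2 := inner_self_eq_norm_sq_to_K (𝕜 := ℂ) (hM.eigenvectorBasis i)
  rw [hM.eigenvectorBasis.orthonormal.1 i] at h2
  rw [← h1, h2]
  norm_num


lemma ev_ge_of_psd {M : Matrix m m ℂ} (hM : M.IsHermitian) {μ : ℝ}
    (hpsd : PosSemidef (M - (μ : ℂ) • 1)) (i : m) : μ ≤ hM.eigenvalues i := by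
  set v := ⇑(hM.eigenvectorBasis i) with hv
  have h0 := hpsd.re_dotProduct_nonneg v
  have hexp : star v ⬝ᵥ (M - (μ : ℂ) • 1) *ᵥ v =
      star v ⬝ᵥ M *ᵥ v - (μ : ℂ) * (star v ⬝ᵥ v) := by
    rw [sub_mulVec, dotProduct_sub, smul_mulVec, dotProduct_smul, smul_eq_mul,
      one_mulVec]
  rw [hexp, vec_unit hM i, mul_one] at h0
  have hev := hM.eigenvalues_eq i
  simp only [RCLike.re_to_complex] at h0 hev
  rw [Complex.sub_re, Complex.ofReal_re] at h0
  rw [← hv] at hev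
  linarith [h0, hev.ge, hev.le]


lemma ev_le_of_psd {M : Matrix m m ℂ} (hM : M.IsHermitian) {Λ : ℝ}
    (hpsd : PosSemidef ((Λ : ℂ) • 1 - M)) (i : m) : hM.eigenvalues i ≤ Λ := by
  set v := ⇑(hM.eigenvectorBasis i) with hv
  have h0 := hpsd.re_dotProduct_nonneg v
  have hexp : star v ⬝ᵥ ((Λ : ℂ) • 1 - M) *ᵥ v =
      (Λ : ℂ) * (star v ⬝ᵥ v) - star v ⬝ᵥ M *ᵥ v := by
    rw [sub_mulVec, dotProduct_sub, smul_mulVec, dotProduct_smul, smul_eq_mul,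
      one_mulVec]
  rw [hexp, vec_unit hM i, mul_one] at h0
  have hev := hM.eigenvalues_eq i
  simp only [RCLike.re_to_complex] at h0 hev
  rw [Complex.sub_re, Complex.ofReal_re] at h0
  rw [← hv] at hev
  linarith [h0, hev.ge, hev.le]


/-- Kantorovich inequality. -/
lemma kantorovich {H : Matrix m m ℂ} (hH : H.PosDef) {μ Λ : ℝ} (hμ : 0 < μ)
    (hlo : ∀ i, μ ≤ hH.isHermitian.eigenvalues i)
    (hhi : ∀ i, hH.isHermitian.eigenvalues i ≤ Λ)
    (x : m → ℂ) (hx : star x ⬝ᵥ x = 1) :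
    (star x ⬝ᵥ H *ᵥ x).re * (star x ⬝ᵥ H⁻¹ *ᵥ x).re ≤ (μ + Λ) ^ 2 / (4 * μ * Λ) := by
  haveI : Nonempty m := by
    by_contra hne
    rw [not_nonempty_iff] at hne
    rw [dotProduct] at hx
    simp [Finset.univ_eq_empty] at hx
  obtain i0 := Classical.arbitrary m
  have hΛ : 0 < Λ := lt_of_lt_of_le hμ ((hlo i0).trans (hhi i0))
  set P : ℝ := (star x ⬝ᵥ H *ᵥ x).re with hP
  set Q : ℝ := (star x ⬝ᵥ H⁻¹ *ᵥ x).re with hQ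
  have hHinv : (H⁻¹).PosDef := hH.inv
  have hP0 : 0 ≤ P := by
    have := hH.posSemidef.re_dotProduct_nonneg x
    simpa [RCLike.re_to_complex] using this
  have hQ0 : 0 ≤ Q := by
    have := hHinv.posSemidef.re_dotProduct_nonneg x
    simpa [RCLike.re_to_complex] using this
  have hpsd := combo_psd hH (μ + Λ) (-1) (-(μ * Λ)) (fun i => by
    have hev : 0 < hH.isHermitian.eigenvalues i := lt_of_lt_of_le hμ (hlo i)
    have h1 : 0 ≤ (hH.isHermitian.eigenvalues i - μ) * (Λ - hH.isHermitian.eigenvalues i) :=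
      mul_nonneg (by linarith [hlo i]) (by linarith [hhi i])
    have h2 : μ * Λ * (hH.isHermitian.eigenvalues i)⁻¹ ≤
        μ + Λ - hH.isHermitian.eigenvalues i := by
      rw [inv_eq_one_div, mul_one_div, div_le_iff₀ hev]
      nlinarith
    linarith)
  have h0 := hpsd.re_dotProduct_nonneg x
  have hexp : star x ⬝ᵥ (((μ + Λ : ℝ) : ℂ) • (1 : Matrix m m ℂ) +
      ((-1 : ℝ) : ℂ) • H + ((-(μ * Λ) : ℝ) : ℂ) • H⁻¹) *ᵥ x =
      ((μ + Λ : ℝ) : ℂ) * (star x ⬝ᵥ x) + ((-1 : ℝ) : ℂ) * (star x ⬝ᵥ H *ᵥ x)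
        + ((-(μ * Λ) : ℝ) : ℂ) * (star x ⬝ᵥ H⁻¹ *ᵥ x) := by
    rw [add_mulVec, add_mulVec, dotProduct_add, dotProduct_add,
      form_smul, form_smul, form_smul, one_mulVec]
  rw [hexp, hx, herm_form_real hH.isHermitian x, herm_form_real hHinv.isHermitian x] at h0
  rw [← hP, ← hQ] at h0
  have hkey : P + μ * Λ * Q ≤ μ + Λ := by
    simp only [RCLike.re_to_complex] at h0
    push_cast at h0
    simp only [Complex.add_re, Complex.mul_re] at h0
    simp at h0
    linarith
  rw [le_div_iff₀ (by positivity)]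
  nlinarith [sq_nonneg (P - μ * Λ * Q), mul_le_mul hkey hkey (by positivity) (by positivity),
    mul_pos hμ hΛ]


lemma schur_inv_entry {p : Type*} [Fintype p] [DecidableEq p]
    (T : Matrix p p ℂ) (a b : p → ℂ) (d : ℂ)
    (hT : IsUnit T.det)
    (hM : IsUnit (Matrix.fromBlocks T (Matrix.of fun i (_ : Unit) => a i)
      (Matrix.of fun (_ : Unit) i => b i) (Matrix.of fun _ _ => d)).det) :
    d - b ⬝ᵥ T⁻¹ *ᵥ a ≠ 0 ∧
    (Matrix.fromBlocks T (Matrix.of fun i (_ : Unit) => a i)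
      (Matrix.of fun (_ : Unit) i => b i) (Matrix.of fun _ _ => d))⁻¹
      (Sum.inr ()) (Sum.inr ()) = (d - b ⬝ᵥ T⁻¹ *ᵥ a)⁻¹ := by
  set Bm : Matrix p Unit ℂ := Matrix.of fun i (_ : Unit) => a i with hBm
  set Cm : Matrix Unit p ℂ := Matrix.of fun (_ : Unit) i => b i with hCm
  set Dm : Matrix Unit Unit ℂ := Matrix.of fun _ _ => d with hDm
  letI iT : Invertible T := T.invertibleOfIsUnitDet hT
  letI iM : Invertible (fromBlocks T Bm Cm Dm) :=
    (fromBlocks T Bm Cm Dm).invertibleOfIsUnitDet hM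
  letI iS : Invertible (Dm - Cm * ⅟T * Bm) :=
    invertibleOfFromBlocks₁₁Invertible T Bm Cm Dm
  have hTinv : ⅟T = T⁻¹ := invOf_eq_nonsing_inv T
  have hSentry : (Dm - Cm * ⅟T * Bm) () () = d - b ⬝ᵥ T⁻¹ *ᵥ a := by
    rw [hTinv]
    simp only [Matrix.sub_apply, hDm, Matrix.of_apply, Matrix.mul_apply, dotProduct,
      Matrix.mulVec, hBm, hCm]
    congr 1
    simp only [Finset.sum_mul, Finset.mul_sum]
    rw [Finset.sum_comm]
    refine Finset.sum_congr rfl fun x _ => Finset.sum_congr rfl fun y _ => by ring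
  have hmul : (Dm - Cm * ⅟T * Bm) () () * ⅟(Dm - Cm * ⅟T * Bm) () () = 1 := by
    have h1 := mul_invOf_self (Dm - Cm * ⅟T * Bm)
    have h2 := congrFun (congrFun h1 ()) ()
    simpa [Matrix.mul_apply, Matrix.one_apply] using h2
  have hne : d - b ⬝ᵥ T⁻¹ *ᵥ a ≠ 0 := by
    intro h0
    rw [hSentry, h0, zero_mul] at hmul
    exact zero_ne_one hmul
  refine ⟨hne, ?_⟩
  have hMinv : (fromBlocks T Bm Cm Dm)⁻¹ = ⅟(fromBlocks T Bm Cm Dm) :=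
    (invOf_eq_nonsing_inv _).symm
  rw [hMinv, invOf_fromBlocks₁₁_eq, fromBlocks_apply₂₂]
  have hfin : ⅟(Dm - Cm * ⅟T * Bm) () () = ((Dm - Cm * ⅟T * Bm) () ())⁻¹ :=
    eq_inv_of_mul_eq_one_left (by rw [mul_comm] at hmul; exact hmul)
  rw [hfin, hSentry]


lemma star_single (l : m) :
    star (Pi.single l 1 : m → ℂ) = (Pi.single l 1 : m → ℂ) := by
  funext i
  by_cases h : i = l <;> simp [Pi.single_apply, h]


lemma form_single (M : Matrix m m ℂ) (l : m) :
    star (Pi.single l 1 : m → ℂ) ⬝ᵥ M *ᵥ (Pi.single l 1 : m → ℂ) = M l l := by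
  rw [star_single, single_dotProduct, one_mul]
  show (fun j => M l j) ⬝ᵥ (Pi.single l 1 : m → ℂ) = M l l
  rw [dotProduct_single, mul_one]


lemma single_unit (l : m) :
    star (Pi.single l 1 : m → ℂ) ⬝ᵥ (Pi.single l 1 : m → ℂ) = 1 := by
  rw [star_single, single_dotProduct, Pi.single_eq_same, mul_one]


lemma single_ne (l : m) : (Pi.single l 1 : m → ℂ) ≠ 0 := fun h => by
  simpa using congrFun h l


lemma herm_real_smul {M : Matrix m m ℂ} (hM : M.IsHermitian) (r : ℝ) :
    IsHermitian ((r : ℂ) • M) := by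
  show ((r : ℂ) • M)ᴴ = _
  rw [conjTranspose_smul, hM.eq]
  norm_num


lemma psd_smul_real {M : Matrix m m ℂ} (hM : M.PosSemidef) {c : ℝ} (hc : 0 ≤ c) :
    PosSemidef ((c : ℂ) • M) := by
  refine .of_dotProduct_mulVec_nonneg (herm_real_smul hM.1 c) fun y => ?_
  rw [form_smul]
  have h := hM.dotProduct_mulVec_nonneg y
  rw [Complex.nonneg_iff] at h ⊢
  constructor
  · rw [Complex.re_ofReal_mul]
    exact mul_nonneg hc h.1
  · rw [Complex.mul_im]
    simp [← h.2]


lemma posdef_combo {Bs Cs : Matrix m m ℂ} (hBs : Bs.PosDef) (hCs : Cs.PosDef)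
    {c s : ℝ} (hc : 0 < c) (hs : 0 < s) : ((c : ℂ) • Bs + (s : ℂ) • Cs).PosDef := by
  refine .of_dotProduct_mulVec_pos ((herm_real_smul hBs.isHermitian c).add
    (herm_real_smul hCs.isHermitian s)) fun y hy => ?_
  rw [form_add, form_smul, form_smul]
  have h1 := hBs.dotProduct_mulVec_pos hy
  have h2 := hCs.dotProduct_mulVec_pos hy
  rw [Complex.pos_iff] at h1 h2 ⊢
  constructor
  · rw [Complex.add_re, Complex.re_ofReal_mul, Complex.re_ofReal_mul]
    have := mul_pos hc h1.1
    have := mul_pos hs h2.1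
    linarith
  · rw [Complex.add_im, Complex.mul_im, Complex.mul_im]
    simp [← h1.2, ← h2.2]


lemma aux_shift_lo {μ ev t : ℝ} (h : μ ≤ ev) : 0 ≤ -μ + 1 * ev + 0 * t := by linarith


lemma aux_shift_hi {Λ ev t : ℝ} (h : ev ≤ Λ) : 0 ≤ Λ + (-1) * ev + 0 * t := by linarith


lemma aux_csone {u v aw : ℝ} (haw : 0 < aw) (h2 : aw ^ 2 = u ^ 2 + v ^ 2) :
    (u / aw) ^ 2 + (v / aw) ^ 2 = 1 := by
  field_simp
  linarith


lemma aux_sq {c s : ℝ} (h : c ^ 2 + s ^ 2 = 1) : c * c + s * s = 1 := by nlinarith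


lemma aux_hPval {u v aw : ℝ} (hu : 0 < u) (hv : 0 < v) (haw : 0 < aw)
    (h2 : aw ^ 2 = u ^ 2 + v ^ 2) : u / aw * u + v / aw * v = aw := by
  field_simp
  nlinarith


lemma aux_mediant {c s ΛB μB ΛC μC κ : ℝ} (hc : 0 < c) (hs : 0 < s)
    (hB : ΛB ≤ κ * μB) (hC : ΛC ≤ κ * μC) :
    c * ΛB + s * ΛC ≤ κ * (c * μB + s * μC) := by nlinarith


lemma aux_mono {c s ΛB μB ΛC μC : ℝ} (hc : 0 < c) (hs : 0 < s)
    (hB : μB ≤ ΛB) (hC : μC ≤ ΛC) :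
    c * μB + s * μC ≤ c * ΛB + s * ΛC := by nlinarith


lemma aux_Kle {μ Λ κ : ℝ} (hμ : 0 < μ) (hΛκ : Λ ≤ κ * μ) (hμΛ : μ ≤ Λ) (hκ : 1 ≤ κ) :
    (μ + Λ) ^ 2 / (4 * μ * Λ) ≤ (1 + κ) ^ 2 / (4 * κ) := by
  have hΛ : 0 < Λ := lt_of_lt_of_le hμ hμΛ
  rw [div_le_div_iff₀ (by positivity) (by positivity)]
  have hfact : (κ * Λ - μ) * (Λ - κ * μ) ≤ 0 :=
    mul_nonpos_of_nonneg_of_nonpos (by nlinarith) (by linarith)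
  nlinarith [hfact, hμ, hΛ, hκ]


lemma aux_final {aw asc κ : ℝ} (haw : 0 < aw) (hasc : 0 < asc) (hκ : 1 ≤ κ)
    (h : aw * asc⁻¹ ≤ (1 + κ) ^ 2 / (4 * κ)) : 4 * κ / (1 + κ) ^ 2 * aw ≤ asc := by
  have hκpos : 0 < κ := lt_of_lt_of_le one_pos hκ
  have h2 : aw ≤ (1 + κ) ^ 2 / (4 * κ) * asc := by
    rw [← div_eq_mul_inv, div_le_iff₀ hasc] at h
    exact h
  rw [div_mul_eq_mul_div, div_le_iff₀ (by positivity)]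
  have h3 : (1 + κ) ^ 2 / (4 * κ) * (4 * κ) = (1 + κ) ^ 2 :=
    div_mul_cancel₀ _ (by positivity)
  nlinarith [h2, h3, hκpos, hasc, haw]

end EDLB

open EDLB

/-- Lower bound on the diagonal entries produced by Gaussian elimination on a
generalized Higham matrix `A = B + iC`: for `j ≥ k+1`,
`|a_jj^{(k)}| = |a_jj - βᵀ A_k⁻¹ α| ≥ (4κ/(1+κ)²) |a_jj|`,
where `κ = max {κ(B), κ(C)}`. -/
theorem elimination_diagonal_lower_bound {n : ℕ}
    (A B C : Matrix (Fin n) (Fin n) ℂ)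
    (hB : B.PosDef) (hC : C.PosDef)
    (hA : A = B + Complex.I • C)
    (κ : ℝ) (hκ : κ = max (condNum hB.isHermitian) (condNum hC.isHermitian))
    (k : ℕ) (hk : k < n) (j : Fin n) (hj : k ≤ j.val)
    (Ak : Matrix (Fin k) (Fin k) ℂ) (α β : Fin k → ℂ)
    (hAk : Ak = A.submatrix (Fin.castLE hk.le) (Fin.castLE hk.le))
    (hα : α = fun i => A (Fin.castLE hk.le i) j)
    (hβ : β = fun i => A j (Fin.castLE hk.le i)) :
    4 * κ / (1 + κ) ^ 2 * ‖A j j‖ ≤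
      ‖A j j - β ⬝ᵥ Ak⁻¹.mulVec α‖ := by
  classical
  -- the index embedding
  set e : Fin k ⊕ Unit → Fin n :=
    Sum.elim (fun i : Fin k => Fin.castLE hk.le i) (fun _ : Unit => j) with he_def
  have he : Function.Injective e := by
    rintro (p | p) (q | q) h
    · simp only [he_def, Sum.elim_inl] at h
      have h2 := congrArg Fin.val h
      simp only [Fin.coe_castLE] at h2
      exact congrArg Sum.inl (Fin.ext h2)
    · exfalso
      simp only [he_def, Sum.elim_inl, Sum.elim_inr] at h
      have h2 := congrArg Fin.val h
      simp only [Fin.coe_castLE] at h2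
      have h3 := p.isLt
      omega
    · exfalso
      simp only [he_def, Sum.elim_inl, Sum.elim_inr] at h
      have h2 := congrArg Fin.val h
      simp only [Fin.coe_castLE] at h2
      have h3 := q.isLt
      omega
    · rfl
  have hcastinj : Function.Injective (Fin.castLE hk.le : Fin k → Fin n) := by
    intro p q h
    have h2 := congrArg Fin.val h
    simp only [Fin.coe_castLE] at h2
    exact Fin.ext h2
  -- submatrices
  set Bs := B.submatrix e e with hBs_def
  set Cs := C.submatrix e e with hCs_def
  have hBs : Bs.PosDef := posDef_submatrix hB he
  have hCs : Cs.PosDef := posDef_submatrix hC he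
  set Ms := A.submatrix e e with hMs_def
  have hMsub : Ms = Bs + Complex.I • Cs := by
    rw [hMs_def, hBs_def, hCs_def, hA]
    ext p q
    simp [Matrix.submatrix_apply, Matrix.add_apply, Matrix.smul_apply]
  -- basis vector
  set l : Fin k ⊕ Unit := Sum.inr () with hl_def
  set x : Fin k ⊕ Unit → ℂ := Pi.single l 1 with hx_def
  have hel : e l = j := rfl
  -- diagonal entries
  have hBjj : 0 < B j j := by
    have := hB.dotProduct_mulVec_pos (single_ne j)
    rwa [form_single] at this
  have hCjj : 0 < C j j := by
    have := hC.dotProduct_mulVec_pos (single_ne j)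
    rwa [form_single] at this
  set u : ℝ := (B j j).re with hu_def
  set v : ℝ := (C j j).re with hv_def
  have hu : 0 < u := (Complex.pos_iff.mp hBjj).1
  have hv : 0 < v := (Complex.pos_iff.mp hCjj).1
  have hBim : (B j j).im = 0 := (Complex.pos_iff.mp hBjj).2.symm
  have hCim : (C j j).im = 0 := (Complex.pos_iff.mp hCjj).2.symm
  have hAjj : A j j = B j j + Complex.I * C j j := by
    rw [hA]; simp [Matrix.add_apply, Matrix.smul_apply]
  set w : ℂ := A j j with hw_def
  have hwre : w.re = u := by
    rw [hAjj]
    simp [Complex.add_re, Complex.mul_re, Complex.I_re, Complex.I_im, hCim, hu_def]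
  have hwim : w.im = v := by
    rw [hAjj]
    simp [Complex.add_im, Complex.mul_im, Complex.I_re, Complex.I_im, hBim, hv_def]
  have habs2 : (‖w‖) ^ 2 = u ^ 2 + v ^ 2 := by
    rw [Complex.sq_norm, Complex.normSq_apply, hwre, hwim]
    ring
  have hwne : w ≠ 0 := fun h => by
    rw [h] at hwre
    simp only [Complex.zero_re] at hwre
    exact ne_of_lt hu hwre
  have habsw : 0 < ‖w‖ := norm_pos_iff.mpr hwne
  -- the rotation coefficients
  set c0 : ℝ := u / ‖w‖ with hc0_def
  set s0 : ℝ := v / ‖w‖ with hs0_def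
  have hc0 : 0 < c0 := div_pos hu habsw
  have hs0 : 0 < s0 := div_pos hv habsw
  have hcs1 : c0 ^ 2 + s0 ^ 2 = 1 := by
    rw [hc0_def, hs0_def]; exact aux_csone habsw habs2
  have hPval : c0 * u + s0 * v = ‖w‖ := by
    rw [hc0_def, hs0_def]; exact aux_hPval hu hv habsw habs2
  -- the rotated Hermitian pair
  set Hθ : Matrix (Fin k ⊕ Unit) (Fin k ⊕ Unit) ℂ :=
    (c0 : ℂ) • Bs + (s0 : ℂ) • Cs with hHθ_def
  set Sθ : Matrix (Fin k ⊕ Unit) (Fin k ⊕ Unit) ℂ :=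
    (c0 : ℂ) • Cs - (s0 : ℂ) • Bs with hSθ_def
  have hHθ : Hθ.PosDef := posdef_combo hBs hCs hc0 hs0
  have hSθ : Sθ.IsHermitian :=
    (herm_real_smul hCs.isHermitian c0).sub (herm_real_smul hBs.isHermitian s0)
  have hNM : Hθ + Complex.I • Sθ = ((c0 : ℂ) - (s0 : ℂ) * Complex.I) • Ms := by
    rw [hHθ_def, hSθ_def, hMsub]
    ext p q
    simp only [Matrix.add_apply, Matrix.sub_apply, Matrix.smul_apply, smul_eq_mul]
    linear_combination ((s0 : ℝ) : ℂ) * Cs p q * Complex.I_sq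
  have hdetMs : IsUnit Ms.det := by
    rw [hMsub]; exact higham_isUnit_det hBs hCs.isHermitian
  have hdetN : IsUnit (Hθ + Complex.I • Sθ).det := higham_isUnit_det hHθ hSθ
  have homega : ((c0 : ℂ) - (s0 : ℂ) * Complex.I) * ((c0 : ℂ) + (s0 : ℂ) * Complex.I) = 1 := by
    have hcsC : ((c0 : ℝ) : ℂ) ^ 2 + ((s0 : ℝ) : ℂ) ^ 2 = 1 := by
      exact_mod_cast congrArg (fun t : ℝ => (t : ℂ)) hcs1
    linear_combination hcsC + (-((s0 : ℝ) : ℂ) ^ 2) * Complex.I_sq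
  have hNinv : (Hθ + Complex.I • Sθ)⁻¹ = ((c0 : ℂ) + (s0 : ℂ) * Complex.I) • Ms⁻¹ := by
    apply inv_eq_right_inv
    rw [hNM, Matrix.smul_mul, Matrix.mul_smul, smul_smul, mul_nonsing_inv _ hdetMs, homega,
      one_smul]
  -- quadratic form values
  set qM : ℂ := star x ⬝ᵥ Ms⁻¹ *ᵥ x with hqM_def
  have hqM_entry : qM = Ms⁻¹ l l := form_single _ _
  have habsomega : ‖(c0 : ℂ) + (s0 : ℂ) * Complex.I‖ = 1 := by
    have h1 : Complex.normSq ((c0 : ℂ) + (s0 : ℂ) * Complex.I) = 1 := by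
      rw [Complex.normSq_apply]
      simp
      exact aux_sq hcs1
    rw [Complex.norm_def, h1, Real.sqrt_one]
  have hL1 : ‖qM‖ ≤ (star x ⬝ᵥ Hθ⁻¹ *ᵥ x).re := by
    have h := abs_inv_form_le hHθ hSθ x
    rw [hNinv, form_smul, norm_mul, habsomega, one_mul] at h
    exact h
  -- P value
  have hPθ : (star x ⬝ᵥ Hθ *ᵥ x).re = ‖w‖ := by
    rw [form_single, hHθ_def]
    have h1 : ((c0 : ℂ) • Bs + (s0 : ℂ) • Cs) l l = (c0 : ℂ) * B j j + (s0 : ℂ) * C j j := by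
      simp [Matrix.add_apply, Matrix.smul_apply, hBs_def, hCs_def, hel]
    rw [h1, ← hPval]
    simp [Complex.add_re, Complex.re_ofReal_mul, hu_def, hv_def]
  -- eigenvalue bounds
  haveI : Nonempty (Fin n) := ⟨⟨0, Nat.lt_of_le_of_lt (Nat.zero_le k) hk⟩⟩
  set μB : ℝ := ⨅ i, hB.isHermitian.eigenvalues i with hμB_def
  set ΛB : ℝ := ⨆ i, hB.isHermitian.eigenvalues i with hΛB_def
  set μC : ℝ := ⨅ i, hC.isHermitian.eigenvalues i with hμC_def
  set ΛC : ℝ := ⨆ i, hC.isHermitian.eigenvalues i with hΛC_def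
  have hμB_le : ∀ i, μB ≤ hB.isHermitian.eigenvalues i := fun i =>
    ciInf_le (Finite.bddBelow_range _) i
  have hΛB_ge : ∀ i, hB.isHermitian.eigenvalues i ≤ ΛB := fun i =>
    le_ciSup (Finite.bddAbove_range _) i
  have hμC_le : ∀ i, μC ≤ hC.isHermitian.eigenvalues i := fun i =>
    ciInf_le (Finite.bddBelow_range _) i
  have hΛC_ge : ∀ i, hC.isHermitian.eigenvalues i ≤ ΛC := fun i =>
    le_ciSup (Finite.bddAbove_range _) i
  have hμB_pos : 0 < μB := by
    obtain ⟨i0, hi0⟩ := Finite.exists_min (hB.isHermitian.eigenvalues)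
    exact lt_of_lt_of_le (hB.eigenvalues_pos i0) (le_ciInf hi0)
  have hμC_pos : 0 < μC := by
    obtain ⟨i0, hi0⟩ := Finite.exists_min (hC.isHermitian.eigenvalues)
    exact lt_of_lt_of_le (hC.eigenvalues_pos i0) (le_ciInf hi0)
  -- PSD shifts for B and C, then for the submatrices
  have hBig_lo : PosSemidef (B - (μB : ℂ) • 1) := by
    have h := combo_psd hB (-μB) 1 0 (fun i => aux_shift_lo (hμB_le i))
    have heq : ((-μB : ℝ) : ℂ) • (1 : Matrix (Fin n) (Fin n) ℂ) + ((1 : ℝ) : ℂ) • B +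
        ((0 : ℝ) : ℂ) • B⁻¹ = B - (μB : ℂ) • 1 := by
      push_cast
      module
    rwa [heq] at h
  have hBig_hi : PosSemidef ((ΛB : ℂ) • 1 - B) := by
    have h := combo_psd hB ΛB (-1) 0 (fun i => aux_shift_hi (hΛB_ge i))
    have heq : ((ΛB : ℝ) : ℂ) • (1 : Matrix (Fin n) (Fin n) ℂ) + ((-1 : ℝ) : ℂ) • B +
        ((0 : ℝ) : ℂ) • B⁻¹ = (ΛB : ℂ) • 1 - B := by
      push_cast
      module
    rwa [heq] at h
  have hCig_lo : PosSemidef (C - (μC : ℂ) • 1) := by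
    have h := combo_psd hC (-μC) 1 0 (fun i => aux_shift_lo (hμC_le i))
    have heq : ((-μC : ℝ) : ℂ) • (1 : Matrix (Fin n) (Fin n) ℂ) + ((1 : ℝ) : ℂ) • C +
        ((0 : ℝ) : ℂ) • C⁻¹ = C - (μC : ℂ) • 1 := by
      push_cast
      module
    rwa [heq] at h
  have hCig_hi : PosSemidef ((ΛC : ℂ) • 1 - C) := by
    have h := combo_psd hC ΛC (-1) 0 (fun i => aux_shift_hi (hΛC_ge i))
    have heq : ((ΛC : ℝ) : ℂ) • (1 : Matrix (Fin n) (Fin n) ℂ) + ((-1 : ℝ) : ℂ) • C +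
        ((0 : ℝ) : ℂ) • C⁻¹ = (ΛC : ℂ) • 1 - C := by
      push_cast
      module
    rwa [heq] at h
  have hsub_lo_B : PosSemidef (Bs - (μB : ℂ) • 1) := by
    have h := hBig_lo.submatrix e
    have heq : (B - (μB : ℂ) • 1).submatrix e e = Bs - (μB : ℂ) • 1 := by
      ext p q
      simp [hBs_def, Matrix.submatrix_apply, Matrix.sub_apply, Matrix.smul_apply,
        Matrix.one_apply, he.eq_iff]
    rwa [heq] at h
  have hsub_hi_B : PosSemidef ((ΛB : ℂ) • 1 - Bs) := by
    have h := hBig_hi.submatrix e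
    have heq : ((ΛB : ℂ) • 1 - B).submatrix e e = (ΛB : ℂ) • 1 - Bs := by
      ext p q
      simp [hBs_def, Matrix.submatrix_apply, Matrix.sub_apply, Matrix.smul_apply,
        Matrix.one_apply, he.eq_iff]
    rwa [heq] at h
  have hsub_lo_C : PosSemidef (Cs - (μC : ℂ) • 1) := by
    have h := hCig_lo.submatrix e
    have heq : (C - (μC : ℂ) • 1).submatrix e e = Cs - (μC : ℂ) • 1 := by
      ext p q
      simp [hCs_def, Matrix.submatrix_apply, Matrix.sub_apply, Matrix.smul_apply,
        Matrix.one_apply, he.eq_iff]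
    rwa [heq] at h
  have hsub_hi_C : PosSemidef ((ΛC : ℂ) • 1 - Cs) := by
    have h := hCig_hi.submatrix e
    have heq : ((ΛC : ℂ) • 1 - C).submatrix e e = (ΛC : ℂ) • 1 - Cs := by
      ext p q
      simp [hCs_def, Matrix.submatrix_apply, Matrix.sub_apply, Matrix.smul_apply,
        Matrix.one_apply, he.eq_iff]
    rwa [heq] at h
  set μθ : ℝ := c0 * μB + s0 * μC with hμθ_def
  set Λθ : ℝ := c0 * ΛB + s0 * ΛC with hΛθ_def
  have hμθ_pos : 0 < μθ := by
    rw [hμθ_def]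
    exact add_pos (mul_pos hc0 hμB_pos) (mul_pos hs0 hμC_pos)
  have hθshift_lo : PosSemidef (Hθ - (μθ : ℂ) • 1) := by
    have heq : Hθ - ((μθ : ℝ) : ℂ) • (1 : Matrix (Fin k ⊕ Unit) (Fin k ⊕ Unit) ℂ) =
        (c0 : ℂ) • (Bs - (μB : ℂ) • 1) + (s0 : ℂ) • (Cs - (μC : ℂ) • 1) := by
      rw [hHθ_def, hμθ_def]
      push_cast
      module
    rw [heq]
    exact (psd_smul_real hsub_lo_B hc0.le).add (psd_smul_real hsub_lo_C hs0.le)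
  have hθshift_hi : PosSemidef ((Λθ : ℂ) • 1 - Hθ) := by
    have heq : ((Λθ : ℝ) : ℂ) • (1 : Matrix (Fin k ⊕ Unit) (Fin k ⊕ Unit) ℂ) - Hθ =
        (c0 : ℂ) • ((ΛB : ℂ) • 1 - Bs) + (s0 : ℂ) • ((ΛC : ℂ) • 1 - Cs) := by
      rw [hHθ_def, hΛθ_def]
      push_cast
      module
    rw [heq]
    exact (psd_smul_real hsub_hi_B hc0.le).add (psd_smul_real hsub_hi_C hs0.le)
  have hθlo : ∀ i, μθ ≤ hHθ.isHermitian.eigenvalues i :=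
    ev_ge_of_psd hHθ.isHermitian hθshift_lo
  have hθhi : ∀ i, hHθ.isHermitian.eigenvalues i ≤ Λθ :=
    ev_le_of_psd hHθ.isHermitian hθshift_hi
  have hK := kantorovich hHθ hμθ_pos hθlo hθhi x (single_unit l)
  have hQ0 : 0 ≤ (star x ⬝ᵥ Hθ⁻¹ *ᵥ x).re := le_trans (norm_nonneg qM) hL1
  have chain1 : ‖w‖ * ‖qM‖ ≤ (μθ + Λθ) ^ 2 / (4 * μθ * Λθ) := by
    calc ‖w‖ * ‖qM‖
        ≤ ‖w‖ * (star x ⬝ᵥ Hθ⁻¹ *ᵥ x).re :=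
          mul_le_mul_of_nonneg_left hL1 habsw.le
      _ = (star x ⬝ᵥ Hθ *ᵥ x).re * (star x ⬝ᵥ Hθ⁻¹ *ᵥ x).re := by rw [hPθ]
      _ ≤ (μθ + Λθ) ^ 2 / (4 * μθ * Λθ) := hK
  -- κ facts
  have hcondB : condNum hB.isHermitian = ΛB / μB := rfl
  have hcondC : condNum hC.isHermitian = ΛC / μC := rfl
  have hκB : ΛB / μB ≤ κ := by rw [hκ, ← hcondB]; exact le_max_left _ _
  have hκC : ΛC / μC ≤ κ := by rw [hκ, ← hcondC]; exact le_max_right _ _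
  have hΛBκ : ΛB ≤ κ * μB := (div_le_iff₀ hμB_pos).mp hκB
  have hΛCκ : ΛC ≤ κ * μC := (div_le_iff₀ hμC_pos).mp hκC
  obtain i0 := Classical.arbitrary (Fin n)
  have hμΛB : μB ≤ ΛB := le_trans (hμB_le i0) (hΛB_ge i0)
  have hμΛC : μC ≤ ΛC := le_trans (hμC_le i0) (hΛC_ge i0)
  have hκ1 : 1 ≤ κ := le_trans ((one_le_div hμB_pos).mpr hμΛB) hκB
  have hκpos : 0 < κ := lt_of_lt_of_le one_pos hκ1
  have hΛθκ : Λθ ≤ κ * μθ := by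
    rw [hΛθ_def, hμθ_def]
    exact aux_mediant hc0 hs0 hΛBκ hΛCκ
  have hμθΛθ : μθ ≤ Λθ := by
    rw [hΛθ_def, hμθ_def]
    exact aux_mono hc0 hs0 hμΛB hμΛC
  have hΛθ_pos : 0 < Λθ := lt_of_lt_of_le hμθ_pos hμθΛθ
  have hKle : (μθ + Λθ) ^ 2 / (4 * μθ * Λθ) ≤ (1 + κ) ^ 2 / (4 * κ) :=
    aux_Kle hμθ_pos hΛθκ hμθΛθ hκ1
  -- the Schur complement entry
  have hblocks : Ms = Matrix.fromBlocks Ak (Matrix.of fun i (_ : Unit) => α i)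
      (Matrix.of fun (_ : Unit) i => β i) (Matrix.of fun _ _ => w) := by
    rw [hMs_def, hAk, hα, hβ]
    ext (p | p) (q | q) <;> rfl
  have hdetAk : IsUnit Ak.det := by
    have hBk := posDef_submatrix hB hcastinj
    have hCk := posDef_submatrix hC hcastinj
    have heq : Ak = B.submatrix (Fin.castLE hk.le) (Fin.castLE hk.le) +
        Complex.I • C.submatrix (Fin.castLE hk.le) (Fin.castLE hk.le) := by
      rw [hAk, hA]
      ext p q
      simp [Matrix.submatrix_apply, Matrix.add_apply, Matrix.smul_apply]
    rw [heq]
    exact higham_isUnit_det hBk hCk.isHermitian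
  have hdetblocks : IsUnit (Matrix.fromBlocks Ak (Matrix.of fun i (_ : Unit) => α i)
      (Matrix.of fun (_ : Unit) i => β i) (Matrix.of fun _ _ => w)).det := by
    rw [← hblocks]; exact hdetMs
  obtain ⟨hscne, hentry⟩ := schur_inv_entry Ak α β w hdetAk hdetblocks
  have hMsll : Ms⁻¹ l l = (w - β ⬝ᵥ Ak⁻¹ *ᵥ α)⁻¹ := by
    rw [hblocks]; exact hentry
  have habsqM : ‖qM‖ = (‖w - β ⬝ᵥ Ak⁻¹ *ᵥ α‖)⁻¹ := by
    rw [hqM_entry, hMsll, norm_inv]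
  have habssc : 0 < ‖w - β ⬝ᵥ Ak⁻¹ *ᵥ α‖ := norm_pos_iff.mpr hscne
  have hfinal : ‖w‖ * (‖w - β ⬝ᵥ Ak⁻¹ *ᵥ α‖)⁻¹ ≤
      (1 + κ) ^ 2 / (4 * κ) := by
    rw [← habsqM]
    exact le_trans chain1 hKle
  show 4 * κ / (1 + κ) ^ 2 * ‖w‖ ≤ ‖w - β ⬝ᵥ Ak⁻¹ *ᵥ α‖
  exact aux_final habsw habssc hκ1 hfinal
end
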